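/- arXiv:1912.07422 — 4 statements merged into one kernel-verified Lean document; each statement's English description precedes it below -/
import Mathlib

section
/- Let 0 < ρ < 1, let α ∈ (0,1) be the unique solution of x^x (1−x)^{1−x} = ρ^x, set h_N = ⌊α(N−1)⌋, C₂ = 3/(log α − log ρ) and C₃ = α(3+ρ)/ρ². Then for all sufficiently large N, h_N − ⌊C₂ log N⌋ − C₃ ≤ E(H_N) ≤ h_N + 1. -/
open Finset Filter Real Topology

/-- `r_{ρ,n}(i) = ρ^{-i} * C(n-1, i)^{-1}`. -/
noncomputable def rfun (ρ : ℝ) (n i : ℕ) : ℝ := (ρ ^ i * (Nat.choose (n - 1) i : ℝ))⁻¹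

/-- `P(H_N ≥ k)` for `k = 1,…,N`, and `0` for `k > N`. -/
noncomputable def tailP (ρ : ℝ) (N k : ℕ) : ℝ :=
  if k ≤ N then (∑ i ∈ Finset.range k, rfun ρ N i)⁻¹ else 0

/-- `P(H_N = k) = P(H_N ≥ k) − P(H_N ≥ k+1)`. -/
noncomputable def pmfP (ρ : ℝ) (N k : ℕ) : ℝ := tailP ρ N k - tailP ρ N (k + 1)

/-- `E(H_N) = ∑_{k=1}^N P(H_N ≥ k)`. -/
noncomputable def EH (ρ : ℝ) (N : ℕ) : ℝ := ∑ k ∈ Finset.Icc 1 N, tailP ρ N k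

/-- `Var(H_N) = ∑_{k=1}^N (k − E(H_N))² P(H_N = k)`. -/
noncomputable def VarH (ρ : ℝ) (N : ℕ) : ℝ :=
  ∑ k ∈ Finset.Icc 1 N, ((k : ℝ) - EH ρ N) ^ 2 * pmfP ρ N k

/-- `P(H_N ≤ t)` for a real threshold `t`. -/
noncomputable def cdfP (ρ : ℝ) (N : ℕ) (t : ℝ) : ℝ :=
  ∑ k ∈ (Finset.Icc 1 N).filter (fun k : ℕ => (k : ℝ) ≤ t), pmfP ρ N k

namespace MHB

noncomputable def b (ρ : ℝ) (m i : ℕ) : ℝ := ρ ^ i * (m.choose i : ℝ)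

lemma b_zero (ρ : ℝ) (m : ℕ) : b ρ m 0 = 1 := by simp [b]

lemma b_pos {ρ : ℝ} (hρ : 0 < ρ) {m i : ℕ} (h : i ≤ m) : 0 < b ρ m i := by
  have hc : (0:ℝ) < (m.choose i : ℝ) := by exact_mod_cast Nat.choose_pos h
  unfold b; positivity

lemma b_nonneg {ρ : ℝ} (hρ : 0 < ρ) (m i : ℕ) : 0 ≤ b ρ m i := by
  unfold b; positivity

lemma b_succ {ρ : ℝ} {m i : ℕ} (h : i < m) :
    b ρ m (i + 1) * (i + 1) = b ρ m i * (ρ * ((m : ℝ) - i)) := by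
  have h2 : ((m.choose (i+1) * (i+1) : ℕ) : ℝ) = ((m.choose i * (m - i) : ℕ) : ℝ) :=
    Nat.cast_inj.mpr (Nat.choose_succ_right_eq m i)
  push_cast [Nat.cast_sub h.le] at h2
  unfold b
  rw [pow_succ]
  linear_combination (ρ ^ i * ρ) * h2

lemma b_ratio_le {ρ : ℝ} (hρ : 0 < ρ) {m i : ℕ} (h : i < m) {c : ℝ}
    (hc : ρ * ((m : ℝ) - i) ≤ c * (i + 1)) : b ρ m (i + 1) ≤ c * b ρ m i := by
  have h1 := b_succ (ρ := ρ) h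
  have hb := b_nonneg hρ m i
  have hi : (0:ℝ) < (i:ℝ) + 1 := by positivity
  have h3 : b ρ m (i+1) * ((i:ℝ)+1) ≤ (c * b ρ m i) * ((i:ℝ)+1) := by
    nlinarith [mul_le_mul_of_nonneg_left hc hb]
  exact le_of_mul_le_mul_right h3 hi

lemma b_ratio_ge {ρ : ℝ} (hρ : 0 < ρ) {m i : ℕ} (h : i < m) {c : ℝ}
    (hc : c * (i + 1) ≤ ρ * ((m : ℝ) - i)) : c * b ρ m i ≤ b ρ m (i + 1) := by
  have h1 := b_succ (ρ := ρ) h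
  have hb := b_nonneg hρ m i
  have hi : (0:ℝ) < (i:ℝ) + 1 := by positivity
  have h3 : (c * b ρ m i) * ((i:ℝ)+1) ≤ b ρ m (i+1) * ((i:ℝ)+1) := by
    nlinarith [mul_le_mul_of_nonneg_left hc hb]
  exact le_of_mul_le_mul_right h3 hi

/-- geometric decay above `h`. -/
lemma b_le_geom {ρ q : ℝ} (hρ : 0 < ρ) (hq : 0 ≤ q) {m h : ℕ}
    (hstep : ∀ t, h ≤ t → t < m → ρ * ((m : ℝ) - t) ≤ q * (t + 1)) :
    ∀ j, h + j ≤ m → b ρ m (h + j) ≤ b ρ m h * q ^ j := by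
  intro j
  induction j with
  | zero => simp
  | succ n ih =>
    intro hle
    have hn : h + n < m := by omega
    have h1 : b ρ m (h + n + 1) ≤ q * b ρ m (h + n) :=
      b_ratio_le hρ hn (by have := hstep (h+n) (by omega) hn; push_cast at this ⊢; linarith)
    have h2 := ih (by omega)
    have hb := b_nonneg hρ m (h+n)
    have hq2 : q * b ρ m (h + n) ≤ q * (b ρ m h * q ^ n) := by
      exact mul_le_mul_of_nonneg_left h2 hq
    calc b ρ m (h + (n+1)) = b ρ m (h + n + 1) := by rw [Nat.add_succ]
    _ ≤ q * b ρ m (h + n) := h1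
    _ ≤ q * (b ρ m h * q ^ n) := hq2
    _ = b ρ m h * q ^ (n+1) := by ring

/-- geometric growth going down from `h`:  `b h * g^(h−i) ≤ b i` for `i₁ ≤ i ≤ h`. -/
lemma b_ge_geom_aux {ρ g : ℝ} (hρ : 0 < ρ) (hg : 0 ≤ g) {m i : ℕ} :
    ∀ n, i + n ≤ m →
    (∀ t, i ≤ t → t < i + n → g * (ρ * ((m : ℝ) - t)) ≤ (t + 1)) →
    b ρ m (i + n) * g ^ n ≤ b ρ m i := by
  intro n
  induction n with
  | zero => simp
  | succ n ih =>
    intro hle hstep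
    have h1 : b ρ m (i+n) * g ^ n ≤ b ρ m i := ih (by omega) (fun t ht htl => hstep t ht (by omega))
    have hstep' : g * b ρ m (i+n+1) ≤ b ρ m (i+n) := by
      have hlt : i + n < m := by omega
      have hb1 := b_succ (ρ := ρ) (m := m) (i := i+n) hlt
      have hs := hstep (i+n) (by omega) (by omega)
      have hbi := b_nonneg hρ m (i+n)
      have hip : (0:ℝ) < ((i+n:ℕ):ℝ) + 1 := by positivity
      have h3 : (g * b ρ m (i+n+1)) * (((i+n:ℕ):ℝ)+1) ≤ b ρ m (i+n) * (((i+n:ℕ):ℝ)+1) := by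
        push_cast at hb1 hs ⊢
        nlinarith [mul_le_mul_of_nonneg_left hs hbi]
      exact le_of_mul_le_mul_right h3 hip
    calc b ρ m (i + (n+1)) * g ^ (n+1) = (g * b ρ m (i+n+1)) * g ^ n := by
          rw [Nat.add_succ]; ring
    _ ≤ b ρ m (i+n) * g ^ n := mul_le_mul_of_nonneg_right hstep' (pow_nonneg hg n)
    _ ≤ b ρ m i := h1

lemma b_ge_geom {ρ g : ℝ} (hρ : 0 < ρ) (hg : 0 ≤ g) {m h i₁ : ℕ} (hh : h ≤ m)
    (hstep : ∀ t, i₁ ≤ t → t < h → g * (ρ * ((m : ℝ) - t)) ≤ (t + 1)) :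
    ∀ i, i₁ ≤ i → i ≤ h → b ρ m h * g ^ (h - i) ≤ b ρ m i := by
  intro i hi1 hih
  have := b_ge_geom_aux (ρ := ρ) (g := g) hρ hg (i := i) (h - i) (by omega)
    (fun t ht htl => hstep t (by omega) (by omega))
  rwa [show i + (h - i) = h by omega] at this

/-- increasing stretch: if ratios ≥ 1 on `[i,j)` then `b i ≤ b j`. -/
lemma b_mono_of_steps {ρ : ℝ} (hρ : 0 < ρ) {m i j : ℕ} (hij : i ≤ j) (hj : j ≤ m)
    (hstep : ∀ t, i ≤ t → t < j → ((t : ℝ) + 1) ≤ ρ * ((m : ℝ) - t)) :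
    b ρ m i ≤ b ρ m j := by
  obtain ⟨n, rfl⟩ : ∃ n, j = i + n := ⟨j - i, by omega⟩
  induction n with
  | zero => simp
  | succ n ih =>
    have h1 : b ρ m i ≤ b ρ m (i + n) := ih (by omega) (by omega)
      (fun t ht htn => hstep t ht (by omega))
    have h2 : (1:ℝ) * b ρ m (i+n) ≤ b ρ m (i + n + 1) := by
      refine b_ratio_ge hρ (by omega) ?_
      have := hstep (i+n) (by omega) (by omega)
      push_cast at this ⊢
      linarith
    rw [one_mul] at h2
    rw [Nat.add_succ]
    exact h1.trans h2

/-- decreasing stretch: if ratios ≤ 1 on `[i,j)` then `b j ≤ b i`. -/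
lemma b_anti_of_steps {ρ : ℝ} (hρ : 0 < ρ) {m i j : ℕ} (hij : i ≤ j) (hj : j ≤ m)
    (hstep : ∀ t, i ≤ t → t < j → ρ * ((m : ℝ) - t) ≤ ((t : ℝ) + 1)) :
    b ρ m j ≤ b ρ m i := by
  obtain ⟨n, rfl⟩ : ∃ n, j = i + n := ⟨j - i, by omega⟩
  induction n with
  | zero => simp
  | succ n ih =>
    have h1 : b ρ m (i + n) ≤ b ρ m i := ih (by omega) (by omega)
      (fun t ht htn => hstep t ht (by omega))
    have h2 : b ρ m (i + n + 1) ≤ 1 * b ρ m (i+n) := by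
      refine b_ratio_le hρ (by omega) ?_
      have := hstep (i+n) (by omega) (by omega)
      push_cast at this ⊢
      linarith
    rw [one_mul] at h2
    rw [Nat.add_succ]
    exact h2.trans h1


lemma rfun_eq (ρ : ℝ) (N i : ℕ) : rfun ρ N i = (b ρ (N-1) i)⁻¹ := rfl

lemma rfun_nonneg {ρ : ℝ} (hρ : 0 < ρ) (N i : ℕ) : 0 ≤ rfun ρ N i := by
  rw [rfun_eq]; exact inv_nonneg.mpr (b_nonneg hρ _ _)

lemma rfun_zero (ρ : ℝ) (N : ℕ) : rfun ρ N 0 = 1 := by simp [rfun]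

lemma S_ge_one {ρ : ℝ} (hρ : 0 < ρ) {N k : ℕ} (hk : 1 ≤ k) :
    1 ≤ ∑ i ∈ Finset.range k, rfun ρ N i := by
  have h0 : rfun ρ N 0 = 1 := rfun_zero ρ N
  calc (1:ℝ) = rfun ρ N 0 := h0.symm
  _ ≤ ∑ i ∈ Finset.range k, rfun ρ N i := by
      refine Finset.single_le_sum (f := fun i => rfun ρ N i) (fun i _ => rfun_nonneg hρ N i) ?_
      simpa using (show 0 < k by omega)

lemma tailP_nonneg {ρ : ℝ} (hρ : 0 < ρ) (N k : ℕ) : 0 ≤ tailP ρ N k := by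
  unfold tailP
  split
  · exact inv_nonneg.mpr (Finset.sum_nonneg fun i _ => rfun_nonneg hρ N i)
  · exact le_refl 0

lemma tailP_le_one {ρ : ℝ} (hρ : 0 < ρ) {N k : ℕ} (hk : 1 ≤ k) : tailP ρ N k ≤ 1 := by
  unfold tailP
  split
  · calc (∑ i ∈ Finset.range k, rfun ρ N i)⁻¹ ≤ (1:ℝ)⁻¹ := inv_anti₀ one_pos (S_ge_one hρ hk)
    _ = 1 := inv_one
  · norm_num

lemma tailP_le_b {ρ : ℝ} (hρ : 0 < ρ) {N k j : ℕ} (hj : j < k) (hk : k ≤ N) (hN : 1 ≤ N) :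
    tailP ρ N k ≤ b ρ (N-1) j := by
  have hjm : j ≤ N - 1 := by omega
  have hbj : 0 < b ρ (N-1) j := b_pos hρ hjm
  have hS : (b ρ (N-1) j)⁻¹ ≤ ∑ i ∈ Finset.range k, rfun ρ N i := by
    rw [← rfun_eq]
    exact Finset.single_le_sum (f := fun i => rfun ρ N i)
      (fun i _ => rfun_nonneg hρ N i) (Finset.mem_range.mpr hj)
  unfold tailP
  rw [if_pos hk]
  calc (∑ i ∈ Finset.range k, rfun ρ N i)⁻¹ ≤ ((b ρ (N-1) j)⁻¹)⁻¹ := by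
        refine inv_anti₀ (by positivity) hS
  _ = b ρ (N-1) j := inv_inv _

lemma geom_sum_le_inv {q : ℝ} (hq0 : 0 ≤ q) (hq1 : q < 1) (n : ℕ) :
    ∑ j ∈ Finset.range n, q ^ j ≤ (1 - q)⁻¹ := by
  have h2 : (0:ℝ) < 1 - q := by linarith
  have h1 : (∑ j ∈ Finset.range n, q ^ j) * (1 - q) = 1 - q ^ n := by
    have := geom_sum_mul (x := q) (n := n)
    nlinarith [this]
  have key : (∑ j ∈ Finset.range n, q ^ j) * (1 - q) ≤ 1 := by
    rw [h1]; nlinarith [pow_nonneg hq0 n]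
  rw [inv_eq_one_div, le_div_iff₀ h2]
  exact key

theorem EH_upper {ρ q : ℝ} (hρ : 0 < ρ) (hq0 : 0 ≤ q) (hq1 : q < 1) {N h : ℕ}
    (hh1 : 1 ≤ h) (hhN : h + 1 ≤ N - 1)
    (hstep : ∀ t, h ≤ t → t < N - 1 → ρ * (((N - 1 : ℕ) : ℝ) - t) ≤ q * (t + 1))
    (hbh : b ρ (N-1) h ≤ 1 - q) :
    EH ρ N ≤ (h : ℝ) + 1 := by
  have hN : 2 ≤ N := by omega
  have hhN' : h ≤ N := by omega
  unfold EH
  have e1 : Finset.Icc 1 N = Finset.Ioc 0 N := by rw [← Finset.Icc_add_one_left_eq_Ioc]; rfl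
  rw [e1, ← Finset.sum_Ioc_consecutive _ (Nat.zero_le h) hhN']
  have part1 : ∑ k ∈ Finset.Ioc 0 h, tailP ρ N k ≤ (h : ℝ) := by
    calc ∑ k ∈ Finset.Ioc 0 h, tailP ρ N k ≤ ∑ k ∈ Finset.Ioc 0 h, (1:ℝ) :=
          Finset.sum_le_sum (fun k hk => tailP_le_one hρ (Finset.mem_Ioc.mp hk).1)
    _ = (h:ℝ) := by simp
  have part2 : ∑ k ∈ Finset.Ioc h N, tailP ρ N k ≤ 1 := by
    have e2 : Finset.Ioc h N = Finset.Ico (h+1) (N+1) := by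
      ext x; simp [Nat.lt_succ_iff]
    have e3 : ∑ k ∈ Finset.Ico (h+1) (N+1), tailP ρ N k
        = ∑ j ∈ Finset.range (N + 1 - (h+1)), tailP ρ N (h+1+j) :=
      Finset.sum_Ico_eq_sum_range _ _ _
    have hNh : N + 1 - (h + 1) = N - h := by omega
    have point : ∀ j ∈ Finset.range (N - h), tailP ρ N (h+1+j) ≤ b ρ (N-1) h * q ^ j := by
      intro j hj
      have hjr := Finset.mem_range.mp hj
      have hk : h + 1 + j ≤ N := by omega
      have h1 : tailP ρ N (h+1+j) ≤ b ρ (N-1) (h+j) :=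
        tailP_le_b hρ (by omega) hk (by omega)
      have h2 : b ρ (N-1) (h+j) ≤ b ρ (N-1) h * q ^ j :=
        b_le_geom hρ hq0 hstep j (by omega)
      exact h1.trans h2
    calc ∑ k ∈ Finset.Ioc h N, tailP ρ N k
        = ∑ j ∈ Finset.range (N - h), tailP ρ N (h+1+j) := by rw [e2, e3, hNh]
    _ ≤ ∑ j ∈ Finset.range (N - h), b ρ (N-1) h * q ^ j := Finset.sum_le_sum point
    _ = b ρ (N-1) h * ∑ j ∈ Finset.range (N - h), q ^ j := by rw [Finset.mul_sum]
    _ ≤ (1 - q) * (1-q)⁻¹ := by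
        have hb0 := b_nonneg hρ (N-1) h
        have hg := geom_sum_le_inv hq0 hq1 (N - h)
        have hge : (0:ℝ) ≤ ∑ j ∈ Finset.range (N - h), q ^ j :=
          Finset.sum_nonneg fun j _ => pow_nonneg hq0 j
        apply mul_le_mul hbh hg hge (by linarith)
    _ = 1 := mul_inv_cancel₀ (by linarith)
  linarith

theorem EH_lower {ρ : ℝ} (hρ : 0 < ρ) {N K : ℕ} (hK : 1 ≤ K) (hKN : K ≤ N) {E : ℝ}
    (hsum : (K : ℝ) * ∑ i ∈ Finset.Ico 1 K, rfun ρ N i ≤ E) :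
    (K : ℝ) - E ≤ EH ρ N := by
  set R := ∑ i ∈ Finset.Ico 1 K, rfun ρ N i with hR
  have hR0 : 0 ≤ R := Finset.sum_nonneg fun i _ => rfun_nonneg hρ N i
  have point : ∀ k ∈ Finset.Icc 1 K, 1 - R ≤ tailP ρ N k := by
    intro k hk
    obtain ⟨hk1, hkK⟩ := Finset.mem_Icc.mp hk
    have hkN : k ≤ N := le_trans hkK hKN
    set S := ∑ i ∈ Finset.range k, rfun ρ N i with hS
    have hS1 : 1 ≤ S := S_ge_one hρ hk1
    have hS0 : 0 < S := by linarith
    have hdecomp : S = rfun ρ N 0 + ∑ i ∈ Finset.Ico 1 k, rfun ρ N i := by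
      rw [hS, Finset.range_eq_Ico, Finset.sum_eq_sum_Ico_succ_bot (by omega : 0 < k)]
    have hSle : S ≤ 1 + R := by
      rw [hdecomp, rfun_zero]
      have : ∑ i ∈ Finset.Ico 1 k, rfun ρ N i ≤ R := by
        refine Finset.sum_le_sum_of_subset_of_nonneg ?_ (fun i _ _ => rfun_nonneg hρ N i)
        exact Finset.Ico_subset_Ico le_rfl hkK
      linarith
    have hAM : 2 - S ≤ S⁻¹ := by
      have h1 : S * S⁻¹ = 1 := mul_inv_cancel₀ (ne_of_gt hS0)
      nlinarith [sq_nonneg (S - 1)]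
    have : tailP ρ N k = S⁻¹ := by unfold tailP; rw [if_pos hkN]
    rw [this]
    linarith
  have h1 : ∑ k ∈ Finset.Icc 1 K, (1 - R) ≤ ∑ k ∈ Finset.Icc 1 K, tailP ρ N k :=
    Finset.sum_le_sum point
  have h2 : ∑ k ∈ Finset.Icc 1 K, tailP ρ N k ≤ EH ρ N := by
    unfold EH
    refine Finset.sum_le_sum_of_subset_of_nonneg ?_ (fun k _ _ => tailP_nonneg hρ N k)
    exact Finset.Icc_subset_Icc le_rfl hKN
  have h3 : ∑ k ∈ Finset.Icc 1 K, (1 - R) = (K:ℝ) * (1 - R) := by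
    rw [Finset.sum_const, Nat.card_Icc]
    simp [nsmul_eq_mul]
  nlinarith [h1, h2, h3]


/-- the exponent function `f(x) = x log ρ + Ent(x)`. -/
noncomputable def fent (ρ : ℝ) (x : ℝ) : ℝ :=
  x * Real.log ρ + Real.negMulLog x + Real.negMulLog (1 - x)

lemma fent_zero (ρ : ℝ) : fent ρ 0 = 0 := by simp [fent]

lemma fent_alpha {ρ α : ℝ} (hρ0 : 0 < ρ) (hα0 : 0 < α) (hα1 : α < 1)
    (hsol : α ^ α * (1 - α) ^ (1 - α) = ρ ^ α) : fent ρ α = 0 := by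
  have h1 : (0:ℝ) < 1 - α := by linarith
  have hlog : Real.log (α ^ α * (1 - α) ^ (1 - α)) = Real.log (ρ ^ α) := by rw [hsol]
  rw [Real.log_mul (by positivity) (by positivity), Real.log_rpow hα0, Real.log_rpow h1,
    Real.log_rpow hρ0] at hlog
  simp only [fent, Real.negMulLog]
  linarith
lemma fent_concave (ρ : ℝ) : ConcaveOn ℝ (Set.Icc (0:ℝ) 1) (fent ρ) := by
  have h1 : ConcaveOn ℝ (Set.Icc (0:ℝ) 1) Real.negMulLog :=
    Real.concaveOn_negMulLog.subset (fun x hx => hx.1) (convex_Icc 0 1)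
  have h2 : ConcaveOn ℝ (Set.Icc (0:ℝ) 1) (fun x => Real.negMulLog (1 - x)) := by
    refine ⟨convex_Icc 0 1, ?_⟩
    intro x hx y hy a c ha hc hac
    have hx' : (1:ℝ) - x ∈ Set.Ici (0:ℝ) := by simp; linarith [hx.2]
    have hy' : (1:ℝ) - y ∈ Set.Ici (0:ℝ) := by simp; linarith [hy.2]
    have := Real.concaveOn_negMulLog.2 hx' hy' ha hc hac
    have harg : a • ((1:ℝ) - x) + c • ((1:ℝ) - y) = 1 - (a • x + c • y) := by
      simp only [smul_eq_mul]; nlinarith [hac]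
    rw [harg] at this
    exact this
  have h3 : ConcaveOn ℝ (Set.Icc (0:ℝ) 1) (fun x : ℝ => x * Real.log ρ) := by
    refine ⟨convex_Icc 0 1, ?_⟩
    intro x hx y hy a c ha hc hac
    simp only [smul_eq_mul]
    exact le_of_eq (by ring)
  unfold fent
  exact (h3.add h1).add h2

lemma fent_nonneg {ρ α : ℝ} (hρ0 : 0 < ρ) (hα0 : 0 < α) (hα1 : α < 1)
    (hsol : α ^ α * (1 - α) ^ (1 - α) = ρ ^ α) {x : ℝ} (hx0 : 0 ≤ x) (hxα : x ≤ α) :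
    0 ≤ fent ρ x := by
  have h0 : (0:ℝ) ∈ Set.Icc (0:ℝ) 1 := by constructor <;> norm_num
  have hA : α ∈ Set.Icc (0:ℝ) 1 := ⟨hα0.le, hα1.le⟩
  set t := x / α with ht
  have ht0 : 0 ≤ t := by positivity
  have ht1 : t ≤ 1 := by rw [ht]; exact div_le_one_of_le₀ hxα hα0.le
  have key := (fent_concave ρ).2 h0 hA (by linarith : (0:ℝ) ≤ 1 - t) ht0 (by ring)
  have harg : (1 - t) • (0:ℝ) + t • α = x := by
    simp only [smul_eq_mul]
    rw [ht, mul_zero, zero_add, div_mul_cancel₀ x hα0.ne']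
  rw [harg, fent_zero, fent_alpha hρ0 hα0 hα1 hsol] at key
  simpa using key

/-- `U k = C(m,k) h^k (m-h)^(m-k)`; the term `k = h` is maximal. -/
lemma mode_nat {m h : ℕ} (hm : h ≤ m) :
    m ^ m ≤ (m + 1) * (m.choose h * h ^ h * (m - h) ^ (m - h)) := by
  set U : ℕ → ℕ := fun k => m.choose k * h ^ k * (m - h) ^ (m - k) with hU
  have hsum : ∑ k ∈ Finset.range (m+1), U k = m ^ m := by
    have := add_pow h (m - h) m
    rw [Nat.add_sub_cancel' hm] at this
    rw [this]
    exact Finset.sum_congr rfl fun k hk => by rw [hU]; push_cast; ring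
  have hratio : ∀ k, k < m → U (k+1) * ((k+1) * (m - h)) = U k * ((m - k) * h) := by
    intro k hk
    have h1 : m.choose (k+1) * (k+1) = m.choose k * (m - k) := Nat.choose_succ_right_eq m k
    have h2 : (m - h) ^ (m - (k+1)) * (m - h) = (m - h) ^ (m - k) := by
      rw [← pow_succ]
      congr 1
      omega
    calc U (k+1) * ((k+1) * (m - h))
        = (m.choose (k+1) * (k+1)) * h ^ (k+1) * ((m - h) ^ (m - (k+1)) * (m - h)) := by
          rw [hU]; ring
    _ = (m.choose k * (m - k)) * h ^ (k+1) * (m - h) ^ (m - k) := by rw [h1, h2]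
    _ = U k * ((m - k) * h) := by rw [hU, pow_succ]; ring
  have up : ∀ k, k < h → U k ≤ U (k+1) := by
    intro k hk
    have hkm : k < m := lt_of_lt_of_le hk hm
    have hid := hratio k hkm
    have hmono : U (k+1) * ((k+1) * (m - h)) ≤ U (k+1) * (h * (m - k)) := by
      apply Nat.mul_le_mul_left
      have : k + 1 ≤ h := hk
      have : m - h ≤ m - k := by omega
      exact Nat.mul_le_mul hk this
    rw [hid] at hmono
    have hpos : 0 < (m - k) * h := by
      have : 0 < m - k := by omega
      have : 0 < h := by omega
      positivity
    have := hmono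
    rw [mul_comm h (m-k)] at this
    exact Nat.le_of_mul_le_mul_right this hpos
  have down : ∀ k, h ≤ k → k < m → U (k+1) ≤ U k := by
    intro k hk hkm
    have hid := hratio k hkm
    have hhm : 0 < m - h := by omega
    have hmono : U k * ((m - k) * h) ≤ U k * ((k+1) * (m - h)) := by
      apply Nat.mul_le_mul_left
      calc (m - k) * h ≤ (m - h) * (k + 1) := Nat.mul_le_mul (by omega) (by omega)
      _ = (k+1) * (m - h) := Nat.mul_comm _ _
    rw [← hid] at hmono
    exact Nat.le_of_mul_le_mul_right hmono (by positivity)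
  have upall : ∀ d k, k + d = h → U k ≤ U h := by
    intro d
    induction d with
    | zero => intro k hk; rw [← hk]; simp
    | succ n ih =>
      intro k hk
      have h1 : U k ≤ U (k+1) := up k (by omega)
      exact h1.trans (ih (k+1) (by omega))
  have downall : ∀ d k, k = h + d → k ≤ m → U k ≤ U h := by
    intro d
    induction d with
    | zero => intro k hk _; simp [hk]
    | succ n ih =>
      intro k hk hkm
      have h1 : U (h + n + 1) ≤ U (h + n) := down (h+n) (by omega) (by omega)
      have := ih (h+n) rfl (by omega)
      calc U k = U (h + n + 1) := by subst hk; rfl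
      _ ≤ U (h+n) := h1
      _ ≤ U h := this
  have hmax : ∀ k ∈ Finset.range (m+1), U k ≤ U h := by
    intro k hk
    rcases le_or_gt k h with hle | hgt
    · exact upall (h - k) k (by omega)
    · exact downall (k - h) k (by omega) (by simpa [Nat.lt_succ_iff] using hk)
  calc m ^ m = ∑ k ∈ Finset.range (m+1), U k := hsum.symm
  _ ≤ ∑ k ∈ Finset.range (m+1), U h := Finset.sum_le_sum hmax
  _ = (m + 1) * U h := by rw [Finset.sum_const, Finset.card_range, smul_eq_mul]
  _ = (m + 1) * (m.choose h * h ^ h * (m - h) ^ (m - h)) := rfl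


lemma exp_m_fent {ρ : ℝ} (hρ0 : 0 < ρ) {m h : ℕ} (h1 : 1 ≤ h) (h2 : h < m) :
    Real.exp ((m:ℝ) * fent ρ ((h:ℝ)/m)) =
      ρ^h * (m:ℝ)^m / ((h:ℝ)^h * (((m-h:ℕ)):ℝ)^(m-h)) := by
  have hm0 : (0:ℝ) < m := by exact_mod_cast (by omega : 0 < m)
  have hh0 : (0:ℝ) < h := by exact_mod_cast h1
  have hmh0 : (0:ℝ) < ((m-h:ℕ):ℝ) := by
    have : 0 < m - h := by omega
    exact_mod_cast this
  have hcast : ((m-h:ℕ):ℝ) = (m:ℝ) - h := by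
    push_cast [Nat.cast_sub h2.le]; ring
  have harg : (m:ℝ) * fent ρ ((h:ℝ)/m) =
      (h:ℝ) * Real.log ρ - ((h:ℝ) * Real.log ((h:ℝ)/m)
        + ((m-h:ℕ):ℝ) * Real.log (((m-h:ℕ):ℝ)/m)) := by
    simp only [fent, Real.negMulLog]
    have e1 : (1:ℝ) - (h:ℝ)/m = ((m-h:ℕ):ℝ)/m := by
      rw [hcast]; field_simp
    rw [e1]
    field_simp
    ring
  rw [harg, Real.exp_sub, Real.exp_add]
  have eh : Real.exp ((h:ℝ) * Real.log ρ) = ρ ^ h := by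
    rw [Real.exp_nat_mul, Real.exp_log hρ0]
  have e2 : Real.exp ((h:ℝ) * Real.log ((h:ℝ)/m)) = ((h:ℝ)/m) ^ h := by
    rw [Real.exp_nat_mul, Real.exp_log (by positivity)]
  have e3 : Real.exp (((m-h:ℕ):ℝ) * Real.log (((m-h:ℕ):ℝ)/m)) = (((m-h:ℕ):ℝ)/m) ^ (m-h) := by
    rw [Real.exp_nat_mul, Real.exp_log (by positivity)]
  rw [eh, e2, e3, div_pow, div_pow]
  have e4 : (m:ℝ)^h * (m:ℝ)^(m-h) = (m:ℝ)^m := by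
    rw [← pow_add]; congr 1; omega
  rw [div_mul_div_comm, e4, div_div_eq_mul_div]


lemma b_floor_lower {ρ α : ℝ} (hρ0 : 0 < ρ) (hα0 : 0 < α) (hα1 : α < 1)
    (hsol : α ^ α * (1 - α) ^ (1 - α) = ρ ^ α) {m h : ℕ}
    (h1 : 1 ≤ h) (h2 : h < m) (hαm : (h:ℝ) ≤ α * m) :
    ((m:ℝ) + 1)⁻¹ ≤ b ρ m h := by
  have hm0 : (0:ℝ) < m := by exact_mod_cast (by omega : 0 < m)
  have hh0 : (0:ℝ) < h := by exact_mod_cast h1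
  have hmh0 : (0:ℝ) < ((m-h:ℕ):ℝ) := by exact_mod_cast (by omega : 0 < m - h)
  have hfe : 0 ≤ fent ρ ((h:ℝ)/m) :=
    fent_nonneg hρ0 hα0 hα1 hsol (by positivity) (by rw [div_le_iff₀ hm0]; linarith)
  have hexp : 1 ≤ ρ^h * (m:ℝ)^m / ((h:ℝ)^h * (((m-h:ℕ)):ℝ)^(m-h)) := by
    rw [← exp_m_fent hρ0 h1 h2]
    exact Real.one_le_exp (by positivity)
  have hAB : (0:ℝ) < (h:ℝ)^h * ((m-h:ℕ):ℝ)^(m-h) := by positivity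
  have k1 : (h:ℝ)^h * ((m-h:ℕ):ℝ)^(m-h) ≤ ρ^h * (m:ℝ)^m := by
    rw [le_div_iff₀ hAB, one_mul] at hexp
    linarith
  have k2 : (m:ℝ)^m ≤ ((m:ℝ)+1) * ((m.choose h : ℝ) * (h:ℝ)^h * ((m-h:ℕ):ℝ)^(m-h)) := by
    have := mode_nat h2.le
    have hc : ((m^m : ℕ):ℝ) ≤ (((m + 1) * (m.choose h * h ^ h * (m - h) ^ (m - h)) : ℕ) : ℝ) := by
      exact_mod_cast this
    push_cast at hc
    convert hc using 2 <;> push_cast <;> ring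
  have hρh : (0:ℝ) < ρ^h := by positivity
  have hC : (0:ℝ) < (m.choose h : ℝ) := by exact_mod_cast Nat.choose_pos h2.le
  rw [inv_eq_one_div, div_le_iff₀ (by positivity)]
  unfold b
  nlinarith [mul_le_mul_of_nonneg_left k2 hρh.le, mul_pos hρh (mul_pos (mul_pos hC (by positivity : (0:ℝ) < (h:ℝ)^h)) (by positivity : (0:ℝ) < ((m-h:ℕ):ℝ)^(m-h)))]

lemma stirling_lower (n : ℕ) (hn : 1 ≤ n) :
    Real.sqrt π * (Real.sqrt (2*n) * ((n:ℝ)/Real.exp 1)^n) ≤ (Nat.factorial n : ℝ) := by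
  obtain ⟨k, rfl⟩ : ∃ k, n = k + 1 := ⟨n - 1, by omega⟩
  have hs : Real.sqrt π ≤ Stirling.stirlingSeq (k+1) := by
    have ht : Tendsto (Stirling.stirlingSeq ∘ Nat.succ) atTop (𝓝 (Real.sqrt π)) :=
      Stirling.tendsto_stirlingSeq_sqrt_pi.comp (tendsto_add_atTop_nat 1)
    exact Stirling.stirlingSeq'_antitone.le_of_tendsto ht k
  have hD : (0:ℝ) < Real.sqrt (2*(k+1:ℕ)) * (((k+1:ℕ):ℝ)/Real.exp 1)^(k+1) := by
    have : (0:ℝ) < ((k+1:ℕ):ℝ) := by positivity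
    positivity
  have hdef : Stirling.stirlingSeq (k+1)
      = Nat.factorial (k+1) / (Real.sqrt (2*(k+1:ℕ)) * (((k+1:ℕ):ℝ)/Real.exp 1)^(k+1)) := rfl
  rw [hdef] at hs
  rw [le_div_iff₀ hD] at hs
  calc Real.sqrt π * (Real.sqrt (2*((k+1:ℕ):ℝ)) * (((k+1:ℕ):ℝ)/Real.exp 1)^(k+1)) ≤ (Nat.factorial (k+1) : ℝ) := by
        convert hs using 3
  _ = (Nat.factorial (k+1:ℕ) : ℝ) := rfl

lemma stirling_upper (n : ℕ) (hn : 1 ≤ n) :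
    (Nat.factorial n : ℝ) ≤ (Real.exp 1 / Real.sqrt 2) * (Real.sqrt (2*n) * ((n:ℝ)/Real.exp 1)^n) := by
  obtain ⟨k, rfl⟩ : ∃ k, n = k + 1 := ⟨n - 1, by omega⟩
  have hs : Stirling.stirlingSeq (k+1) ≤ Real.exp 1 / Real.sqrt 2 := by
    have h0 := Stirling.stirlingSeq'_antitone (Nat.zero_le k)
    simpa [Stirling.stirlingSeq_one] using h0
  have hD : (0:ℝ) < Real.sqrt (2*(k+1:ℕ)) * (((k+1:ℕ):ℝ)/Real.exp 1)^(k+1) := by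
    have : (0:ℝ) < ((k+1:ℕ):ℝ) := by positivity
    positivity
  have hdef : Stirling.stirlingSeq (k+1)
      = Nat.factorial (k+1) / (Real.sqrt (2*(k+1:ℕ)) * (((k+1:ℕ):ℝ)/Real.exp 1)^(k+1)) := rfl
  rw [hdef, div_le_iff₀ hD] at hs
  calc (Nat.factorial (k+1:ℕ) : ℝ) ≤ Real.exp 1 / Real.sqrt 2 * (Real.sqrt (2*((k+1:ℕ):ℝ)) * (((k+1:ℕ):ℝ)/Real.exp 1)^(k+1)) := by
        convert hs using 4
  _ = _ := rfl


lemma b_upper_stirling {ρ : ℝ} (hρ0 : 0 < ρ) {m h : ℕ} (h1 : 1 ≤ h) (h2 : h < m) :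
    b ρ m h ≤ Real.exp 1 / (2*π) * (Real.sqrt m / (Real.sqrt h * Real.sqrt ((m-h:ℕ)))) *
      Real.exp ((m:ℝ) * fent ρ ((h:ℝ)/m)) := by
  set e : ℝ := Real.exp 1 with he
  have he0 : (0:ℝ) < e := Real.exp_pos 1
  have hm0 : (0:ℝ) < m := by exact_mod_cast (by omega : 0 < m)
  have hh0 : (0:ℝ) < h := by exact_mod_cast h1
  have hmh1 : 1 ≤ m - h := by omega
  have hmh0 : (0:ℝ) < ((m-h:ℕ):ℝ) := by exact_mod_cast (by omega : 0 < m - h)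
  set NU : ℝ := e / Real.sqrt 2 * (Real.sqrt (2*m) * ((m:ℝ)/e)^m) with hNU
  set P2 : ℝ := Real.sqrt π * (Real.sqrt (2*h) * ((h:ℝ)/e)^h) with hP2
  set P3 : ℝ := Real.sqrt π * (Real.sqrt (2*((m-h:ℕ):ℝ)) * (((m-h:ℕ):ℝ)/e)^(m-h)) with hP3
  have hπ0 : (0:ℝ) < π := Real.pi_pos
  have hP20 : 0 < P2 := by rw [hP2]; positivity
  have hP30 : 0 < P3 := by rw [hP3]; positivity
  have fact1 : (Nat.factorial m : ℝ) ≤ NU := stirling_upper m (by omega)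
  have fact2 : P2 ≤ (Nat.factorial h : ℝ) := stirling_lower h h1
  have fact3 : P3 ≤ (Nat.factorial (m-h) : ℝ) := stirling_lower (m-h) hmh1
  have hfac : (m.choose h : ℝ) * (Nat.factorial h : ℝ) * (Nat.factorial (m-h) : ℝ)
      = (Nat.factorial m : ℝ) := by
    exact_mod_cast congrArg (Nat.cast : ℕ → ℝ) (Nat.choose_mul_factorial_mul_factorial h2.le)
  have hA0 : (0:ℝ) < (Nat.factorial h : ℝ) := by exact_mod_cast Nat.factorial_pos h
  have hB0 : (0:ℝ) < (Nat.factorial (m-h) : ℝ) := by exact_mod_cast Nat.factorial_pos (m-h)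
  have hchoose : (m.choose h : ℝ) ≤ NU / (P2 * P3) := by
    have hCeq : (m.choose h : ℝ) = (Nat.factorial m : ℝ) /
        ((Nat.factorial h : ℝ) * (Nat.factorial (m-h) : ℝ)) := by
      field_simp
      linarith [hfac]
    rw [hCeq]
    apply div_le_div₀ (by rw [hNU]; positivity) fact1 (by positivity)
    exact mul_le_mul fact2 fact3 hP30.le hA0.le
  have hkey : ρ^h * (NU / (P2 * P3)) = e / (2*π) * (Real.sqrt m / (Real.sqrt h * Real.sqrt ((m-h:ℕ)))) *
      Real.exp ((m:ℝ) * fent ρ ((h:ℝ)/m)) := by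
    rw [exp_m_fent hρ0 h1 h2, hNU, hP2, hP3]
    have s2m : Real.sqrt (2*(m:ℝ)) = Real.sqrt 2 * Real.sqrt (m:ℝ) := Real.sqrt_mul (by norm_num) _
    have s2h : Real.sqrt (2*(h:ℝ)) = Real.sqrt 2 * Real.sqrt (h:ℝ) := Real.sqrt_mul (by norm_num) _
    have s2mh : Real.sqrt (2*((m-h:ℕ):ℝ)) = Real.sqrt 2 * Real.sqrt ((m-h:ℕ):ℝ) :=
      Real.sqrt_mul (by norm_num) _
    have hππ : Real.sqrt π * Real.sqrt π = π := Real.mul_self_sqrt hπ0.le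
    have h22 : Real.sqrt 2 * Real.sqrt 2 = 2 := Real.mul_self_sqrt (by norm_num)
    have hem : e^h * e^(m-h) = e^m := by rw [← pow_add]; congr 1; omega
    have dm : ((m:ℝ)/e)^m = (m:ℝ)^m/e^m := div_pow _ _ _
    have dh : ((h:ℝ)/e)^h = (h:ℝ)^h/e^h := div_pow _ _ _
    have dmh : (((m-h:ℕ):ℝ)/e)^(m-h) = ((m-h:ℕ):ℝ)^(m-h)/e^(m-h) := div_pow _ _ _
    rw [s2m, s2h, s2mh, dm, dh, dmh]
    have hsq2 : (0:ℝ) < Real.sqrt 2 := by positivity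
    have hsqπ : (0:ℝ) < Real.sqrt π := Real.sqrt_pos.mpr hπ0
    have hsqm : (0:ℝ) < Real.sqrt (m:ℝ) := Real.sqrt_pos.mpr hm0
    have hsqh : (0:ℝ) < Real.sqrt (h:ℝ) := Real.sqrt_pos.mpr hh0
    have hsqmh : (0:ℝ) < Real.sqrt ((m-h:ℕ):ℝ) := Real.sqrt_pos.mpr hmh0
    have hem0 : (0:ℝ) < e^m := by positivity
    have heh0 : (0:ℝ) < e^h := by positivity
    have hemh0 : (0:ℝ) < e^(m-h) := by positivity
    have hhh0 : (0:ℝ) < (h:ℝ)^h := by positivity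
    have hmm0 : (0:ℝ) < (m:ℝ)^m := by positivity
    have hmhh0 : (0:ℝ) < ((m-h:ℕ):ℝ)^(m-h) := by positivity
    field_simp
    rw [hem, Real.sq_sqrt (by norm_num : (0:ℝ) ≤ 2), Real.sq_sqrt hπ0.le]
    ring
  calc b ρ m h = ρ^h * (m.choose h : ℝ) := rfl
  _ ≤ ρ^h * (NU / (P2 * P3)) := by
      apply mul_le_mul_of_nonneg_left hchoose (by positivity)
  _ = _ := hkey


lemma xlogx_lip {c x y : ℝ} (hc : 0 < c) (hy : c ≤ y) (hxy : y ≤ x) (hx : x ≤ 1) :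
    |x * Real.log x - y * Real.log y| ≤ (x - y) * (1/c - Real.log c) := by
  have hy0 : 0 < y := lt_of_lt_of_le hc hy
  have hx0 : 0 < x := lt_of_lt_of_le hy0 hxy
  have hc1 : c ≤ 1 := le_trans (le_trans hy hxy) hx
  have hlogc : Real.log c ≤ 0 := Real.log_nonpos hc.le hc1
  have hlogy_le : Real.log y ≤ 0 := Real.log_nonpos hy0.le (le_trans hxy hx)
  have hlogy_ge : Real.log c ≤ Real.log y := Real.log_le_log hc hy
  have hmono : Real.log y ≤ Real.log x := Real.log_le_log hy0 hxy
  have hdiff : Real.log x - Real.log y ≤ (x - y)/y := by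
    have h1 : Real.log x - Real.log y = Real.log (x/y) := (Real.log_div hx0.ne' hy0.ne').symm
    have h2 : Real.log (x/y) ≤ x/y - 1 := Real.log_le_sub_one_of_pos (by positivity)
    rw [h1]
    calc Real.log (x/y) ≤ x/y - 1 := h2
    _ = (x - y)/y := by field_simp
  have hb1 : 0 ≤ x * (Real.log x - Real.log y) := by
    apply mul_nonneg hx0.le; linarith
  have hb1' : x * (Real.log x - Real.log y) ≤ (x - y)/c := by
    calc x * (Real.log x - Real.log y) ≤ 1 * ((x-y)/y) := by
          apply mul_le_mul hx hdiff (by linarith) (by norm_num)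
    _ = (x-y)/y := one_mul _
    _ ≤ (x-y)/c := by apply div_le_div_of_nonneg_left (by linarith) hc hy
  have hb2 : (x - y) * Real.log c ≤ (x - y) * Real.log y := by
    apply mul_le_mul_of_nonneg_left hlogy_ge (by linarith)
  have hb2' : (x - y) * Real.log y ≤ 0 := mul_nonpos_of_nonneg_of_nonpos (by linarith) hlogy_le
  have hid : x * Real.log x - y * Real.log y = x * (Real.log x - Real.log y) + (x - y) * Real.log y := by
    ring
  have e5 : (x - y) * (1/c - Real.log c) = (x-y)/c + (x-y)*(-Real.log c) := by
    rw [← mul_one_div]; ring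
  have hnegc : 0 ≤ (x-y) * (-Real.log c) := mul_nonneg (by linarith) (by linarith)
  rw [abs_le]
  constructor
  · rw [hid, e5]
    have h6 : -((x-y)/c) ≤ 0 := by
      have : 0 ≤ (x-y)/c := div_nonneg (by linarith) hc.le
      linarith
    have h7 : (x-y)*(-Real.log c) = -((x-y)*Real.log c) := by ring
    linarith [hb1, hb2]
  · rw [hid, e5]
    linarith [hb1', hb2', hnegc]

lemma fent_near_alpha {ρ α : ℝ} (hρ0 : 0 < ρ) (hα0 : 0 < α) (hα1 : α < 1)
    (hsol : α ^ α * (1 - α) ^ (1 - α) = ρ ^ α) {x : ℝ} (hx1 : α/2 ≤ x) (hx2 : x ≤ α) :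
    fent ρ x ≤ (α - x) * ((- Real.log ρ) + (1/(α/2) - Real.log (α/2)) + (1/(1-α) - Real.log (1-α))) := by
  have h1α : (0:ℝ) < 1 - α := by linarith
  have hfα : fent ρ α = 0 := fent_alpha hρ0 hα0 hα1 hsol
  have hL1 : |α * Real.log α - x * Real.log x| ≤ (α - x) * (1/(α/2) - Real.log (α/2)) :=
    xlogx_lip (by positivity) hx1 hx2 hα1.le
  have hL2 : |(1-x) * Real.log (1-x) - (1-α) * Real.log (1-α)|
      ≤ ((1-x) - (1-α)) * (1/(1-α) - Real.log (1-α)) :=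
    xlogx_lip h1α le_rfl (by linarith) (by nlinarith [hx1, hα0])
  have hterm : fent ρ x - fent ρ α
      = (α - x) * (- Real.log ρ) + (α * Real.log α - x * Real.log x)
        - ((1-x) * Real.log (1-x) - (1-α) * Real.log (1-α)) := by
    simp only [fent, Real.negMulLog]
    ring
  have ha1 := (abs_le.mp hL1).2
  have ha2 := (abs_le.mp hL2).1
  have hxx : (1-x) - (1-α) = α - x := by ring
  rw [hxx] at hL2
  have ha2' := (abs_le.mp hL2).1
  have : fent ρ x = fent ρ x - fent ρ α := by rw [hfα]; ring
  rw [this, hterm]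
  nlinarith [ha1, ha2']


lemma ev_le_of_tendsto_zero {f : ℕ → ℝ} (hf : Tendsto f atTop (𝓝 0)) {ε : ℝ} (hε : 0 < ε) :
    ∀ᶠ n in atTop, f n ≤ ε :=
  hf.eventually (eventually_le_nhds hε)

/-- polynomial times geometric tends to zero (cube version, with shift). -/
lemma ev_cube_geom {r : ℝ} (hr0 : 0 < r) (hr1 : r < 1) (C : ℝ) {ε : ℝ} (hε : 0 < ε) :
    ∀ᶠ m : ℕ in atTop, C * (((m:ℝ)+1)^3 * r ^ m) ≤ ε := by
  have T3 : Tendsto (fun n : ℕ => (n:ℝ)^3 * r^n) atTop (𝓝 0) :=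
    tendsto_pow_const_mul_const_pow_of_lt_one 3 hr0.le hr1
  have T4 : Tendsto (fun m : ℕ => ((m+1:ℕ):ℝ)^3 * r^(m+1)) atTop (𝓝 0) :=
    T3.comp (tendsto_add_atTop_nat 1)
  have T5 : Tendsto (fun m : ℕ => (C/r) * (((m+1:ℕ):ℝ)^3 * r^(m+1))) atTop (𝓝 0) := by
    have := T4.const_mul (C/r)
    simpa using this
  have heq : ∀ m : ℕ, (C/r) * (((m+1:ℕ):ℝ)^3 * r^(m+1)) = C * (((m:ℝ)+1)^3 * r ^ m) := by
    intro m
    push_cast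
    rw [pow_succ]
    field_simp
    ring
  have T6 : Tendsto (fun m : ℕ => C * (((m:ℝ)+1)^3 * r ^ m)) atTop (𝓝 0) := by
    refine T5.congr heq
  exact ev_le_of_tendsto_zero T6 hε

/-- `C * N^2 * exp(-(9/4) log N) → 0`. -/
lemma ev_sq_exp (C : ℝ) {ε : ℝ} (hε : 0 < ε) :
    ∀ᶠ N : ℕ in atTop, C * ((N:ℝ)^2 * Real.exp (-(9/4) * Real.log N)) ≤ ε := by
  have hx : Tendsto (fun x : ℝ => x ^ (-(1/4) : ℝ)) atTop (𝓝 0) :=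
    tendsto_rpow_neg_atTop (by norm_num)
  have hn : Tendsto (fun N : ℕ => ((N:ℝ)) ^ (-(1/4) : ℝ)) atTop (𝓝 0) :=
    hx.comp tendsto_natCast_atTop_atTop
  have hC : Tendsto (fun N : ℕ => C * ((N:ℝ)) ^ (-(1/4) : ℝ)) atTop (𝓝 0) := by
    simpa using hn.const_mul C
  have heq : ∀ᶠ N : ℕ in atTop, C * ((N:ℝ)) ^ (-(1/4) : ℝ)
      = C * ((N:ℝ)^2 * Real.exp (-(9/4) * Real.log N)) := by
    filter_upwards [eventually_ge_atTop 1] with N hN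
    have hN0 : (0:ℝ) < N := by exact_mod_cast hN
    have e1 : Real.exp (-(9/4) * Real.log N) = (N:ℝ) ^ (-(9/4) : ℝ) := by
      rw [Real.rpow_def_of_pos hN0]; ring_nf
    have e2 : (N:ℝ)^2 = (N:ℝ) ^ ((2:ℕ):ℝ) := by
      rw [Real.rpow_natCast]
    rw [e1, e2, ← Real.rpow_add hN0]
    norm_num
  have T : Tendsto (fun N : ℕ => C * ((N:ℝ)^2 * Real.exp (-(9/4) * Real.log N))) atTop (𝓝 0) :=
    hC.congr' heq
  exact ev_le_of_tendsto_zero T hε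

/-- logarithmic growth beaten by linear: for any `a d > 0`, eventually `a log N + 4 ≤ d N`. -/
lemma ev_log_le {a d : ℝ} (ha : 0 < a) (hd : 0 < d) :
    ∀ᶠ N : ℕ in atTop, a * Real.log N + 4 ≤ d * (N:ℝ) := by
  have hlo := Real.isLittleO_log_id_atTop.def (show (0:ℝ) < d/(2*a) by positivity)
  have hlo' : ∀ᶠ x : ℝ in atTop, ‖Real.log x‖ ≤ d/(2*a) * ‖x‖ := hlo
  have h1 : ∀ᶠ N : ℕ in atTop, ‖Real.log (N:ℝ)‖ ≤ d/(2*a) * ‖(N:ℝ)‖ :=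
    tendsto_natCast_atTop_atTop.eventually hlo'
  filter_upwards [h1, eventually_ge_atTop (Nat.ceil ((8:ℝ)/d))] with N hN1 hN2
  have hN2' : (8:ℝ)/d ≤ (N:ℝ) := by
    calc (8:ℝ)/d ≤ (Nat.ceil ((8:ℝ)/d) : ℝ) := Nat.le_ceil _
    _ ≤ (N:ℝ) := by exact_mod_cast hN2
  have hN0 : (0:ℝ) ≤ (N:ℝ) := by positivity
  have hlog : Real.log (N:ℝ) ≤ d/(2*a) * (N:ℝ) := by
    have := hN1
    rw [Real.norm_eq_abs, Real.norm_eq_abs, abs_of_nonneg hN0] at this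
    exact (le_abs_self _).trans this
  have h4 : (4:ℝ) ≤ d * (N:ℝ)/2 := by
    rw [div_le_iff₀ hd] at hN2'
    linarith
  have : a * Real.log N ≤ a * (d/(2*a) * (N:ℝ)) := mul_le_mul_of_nonneg_left hlog ha.le
  have he : a * (d/(2*a) * (N:ℝ)) = d * (N:ℝ)/2 := by field_simp
  linarith [this, he ▸ this]


end MHB

set_option maxHeartbeats 2000000 in
theorem mean_height_bounds_rho_lt_one (ρ α C₂ C₃ : ℝ) (hρ0 : 0 < ρ) (hρ1 : ρ < 1)
    (hα : α ∈ Set.Ioo (0 : ℝ) 1)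
    (hsol : α ^ α * (1 - α) ^ (1 - α) = ρ ^ α)
    (huniq : ∀ x ∈ Set.Ioo (0 : ℝ) 1, x ^ x * (1 - x) ^ (1 - x) = ρ ^ x → x = α)
    (hC₂ : C₂ = 3 / (Real.log α - Real.log ρ))
    (hC₃ : C₃ = α * (3 + ρ) / ρ ^ 2) :
    ∀ᶠ N : ℕ in atTop,
      (⌊α * ((N : ℝ) - 1)⌋₊ : ℝ) - (⌊C₂ * Real.log N⌋₊ : ℝ) - C₃ ≤ EH ρ N ∧
      EH ρ N ≤ (⌊α * ((N : ℝ) - 1)⌋₊ : ℝ) + 1 := by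
  obtain ⟨hα0, hα1⟩ := hα
  have h1α : (0:ℝ) < 1 - α := by linarith
  have hfα : MHB.fent ρ α = 0 := MHB.fent_alpha hρ0 hα0 hα1 hsol
  have hραlog : Real.log ρ < Real.log α := by
    by_contra hcon
    push_neg at hcon
    have h2 : Real.log (1-α) < 0 := Real.log_neg (by linarith) (by linarith)
    have h3 : MHB.fent ρ α > 0 := by
      simp only [MHB.fent, Real.negMulLog]
      nlinarith only [hcon, h2, hα0, h1α, mul_nonneg hα0.le (sub_nonneg.mpr hcon), mul_pos h1α (neg_pos.mpr h2)]
    rw [hfα] at h3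
    exact lt_irrefl 0 h3
  have hαρ : ρ < α := by
    have := Real.exp_lt_exp.mpr hραlog
    rwa [Real.exp_log hρ0, Real.exp_log hα0] at this
  set c : ℝ := Real.log α - Real.log ρ with hcdef
  have hc0 : 0 < c := by rw [hcdef]; linarith
  have hC₂0 : 0 < C₂ := by rw [hC₂]; positivity
  set qi : ℝ := ρ * (1-α)/α with hqidef
  have hqi0 : 0 < qi := by rw [hqidef]; positivity
  have hqi1 : qi < 1 := by
    rw [hqidef, div_lt_one hα0]
    have := mul_pos hρ0 hα0
    linarith
  set q : ℝ := (1+qi)/2 with hqdef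
  have hq0 : 0 < q := by rw [hqdef]; linarith
  have hq1 : q < 1 := by rw [hqdef]; linarith
  have hqgap : 1 - q = (1-qi)/2 := by rw [hqdef]; ring
  set z : ℝ := Real.exp (-(3*c/4)) with hzdef
  have hz0 : 0 < z := Real.exp_pos _
  have hz1 : z < 1 := by
    rw [hzdef, Real.exp_lt_one_iff]
    linarith
  set g : ℝ := Real.exp (3*c/4) with hgdef
  have hg0 : 0 < g := Real.exp_pos _
  have hzg : z = g⁻¹ := by
    rw [hzdef, hgdef, ← Real.exp_neg]
  set β₀ : ℝ := ρ * g with hβ₀def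
  have hβ₀0 : 0 < β₀ := by rw [hβ₀def]; positivity
  have hβ₀α : β₀ < α := by
    have h1 : Real.exp c = α / ρ := by
      rw [hcdef, Real.exp_sub, Real.exp_log hα0, Real.exp_log hρ0]
    have h2 : g < Real.exp c := by
      rw [hgdef, Real.exp_lt_exp]
      linarith
    rw [h1] at h2
    rw [hβ₀def]
    calc ρ * g < ρ * (α/ρ) := mul_lt_mul_of_pos_left h2 hρ0
    _ = α := by field_simp
  set Cf : ℝ := (- Real.log ρ) + (1/(α/2) - Real.log (α/2)) + (1/(1-α) - Real.log (1-α)) with hCfdef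
  have hCf0 : 0 ≤ Cf := by
    have l1 : 0 < - Real.log ρ := by
      have := Real.log_neg hρ0 hρ1; linarith
    have l2 : Real.log (α/2) ≤ 0 := Real.log_nonpos (by positivity) (by linarith)
    have l3 : Real.log (1-α) ≤ 0 := Real.log_nonpos (by linarith) (by linarith)
    have l4 : (0:ℝ) < 1/(α/2) := by positivity
    have l5 : (0:ℝ) < 1/(1-α) := by positivity
    rw [hCfdef]; linarith
  set Kst : ℝ := Real.exp 1/(2*π) * Real.exp Cf / (Real.sqrt (α/2) * Real.sqrt (1-α)) with hKstdef
  have hsα2 : 0 < Real.sqrt (α/2) := Real.sqrt_pos.mpr (by positivity)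
  have hs1α : 0 < Real.sqrt (1-α) := Real.sqrt_pos.mpr h1α
  have hKst0 : 0 < Kst := by
    have := Real.pi_pos
    rw [hKstdef]; positivity
  set rb : ℝ := Real.exp (-(3*c/4)*(α-β₀)) with hrbdef
  have hrb0 : 0 < rb := Real.exp_pos _
  have hrb1 : rb < 1 := by
    rw [hrbdef, Real.exp_lt_one_iff]
    have h2 : -(3*c/4)*(α-β₀) = -(3/4)*(c*(α-β₀)) := by ring
    rw [h2]
    exact mul_neg_of_neg_of_pos (by norm_num) (mul_pos hc0 (sub_pos.mpr hβ₀α))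
  -- eventual facts
  have hmrT : Tendsto (fun N : ℕ => ((N-1:ℕ):ℝ)) atTop atTop :=
    tendsto_natCast_atTop_atTop.comp (tendsto_sub_atTop_nat 1)
  have EVa : ∀ᶠ N : ℕ in atTop, 2/α ≤ ((N-1:ℕ):ℝ) := hmrT.eventually_ge_atTop _
  have EVb : ∀ᶠ N : ℕ in atTop, 6 ≤ ((N-1:ℕ):ℝ) := hmrT.eventually_ge_atTop _
  have EVc : ∀ᶠ N : ℕ in atTop, 42/(ρ*α) ≤ ((N-1:ℕ):ℝ) := hmrT.eventually_ge_atTop _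
  have EVd : ∀ᶠ N : ℕ in atTop, ρ/(q*α - ρ*(1-α)) ≤ ((N-1:ℕ):ℝ) := hmrT.eventually_ge_atTop _
  have EVe : ∀ᶠ N : ℕ in atTop, 3/β₀ ≤ ((N-1:ℕ):ℝ) := hmrT.eventually_ge_atTop _
  have EVf : ∀ᶠ N : ℕ in atTop, (2*Kst/(1-qi))^2 ≤ ((N-1:ℕ):ℝ) := hmrT.eventually_ge_atTop _
  have EVg : ∀ᶠ N : ℕ in atTop, C₂ * Real.log N + 4 ≤ (α-β₀)/2 * (N:ℝ) :=
    MHB.ev_log_le hC₂0 (by linarith [hβ₀α] : (0:ℝ) < (α-β₀)/2)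
  have EVh : ∀ᶠ N : ℕ in atTop,
      (1/z^2) * ((((N-1:ℕ):ℝ)+1)^3 * rb ^ (N-1)) ≤ α/(2*ρ^2) :=
    (tendsto_sub_atTop_nat 1).eventually
      (MHB.ev_cube_geom hrb0 hrb1 (1/z^2) (by positivity : (0:ℝ) < α/(2*ρ^2)))
  have EVi : ∀ᶠ N : ℕ in atTop,
      ((1-z)⁻¹ * z * Real.exp (3*c/4)) * ((N:ℝ)^2 * Real.exp (-(9/4) * Real.log N)) ≤ α/ρ^2 :=
    MHB.ev_sq_exp _ (by positivity : (0:ℝ) < α/ρ^2)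
  filter_upwards [EVa, EVb, EVc, EVd, EVe, EVf, EVg, EVh, EVi, eventually_ge_atTop 2]
    with N hEa hEb hEc hEd hEe hEf hEg hEh hEi hN2
  set M : ℕ := ⌊C₂ * Real.log N⌋₊ with hMdef
  set m : ℕ := N - 1 with hmdef
  set mr : ℝ := ((m:ℕ):ℝ) with hmrdef
  have hmr3 : (3:ℝ) ≤ mr := by linarith [hEb]
  have hmr0 : (0:ℝ) < mr := by linarith
  have hNmr : (N:ℝ) - 1 = mr := by
    rw [hmrdef, hmdef]
    push_cast [Nat.cast_sub (by omega : 1 ≤ N)]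
    ring
  have hαmr2 : 2 ≤ α * mr := by
    rw [div_le_iff₀ hα0] at hEa
    linarith [hEa]
  set h : ℕ := ⌊α * mr⌋₊ with hhdef
  have hgoalh : ⌊α * ((N : ℝ) - 1)⌋₊ = h := by rw [hNmr]
  have hh_le : (h:ℝ) ≤ α * mr := Nat.floor_le (by positivity)
  have hh_gt : α * mr - 1 < (h:ℝ) := Nat.sub_one_lt_floor _
  have hh1 : 1 ≤ h := by
    rw [hhdef]
    exact Nat.le_floor (by push_cast; linarith)
  have hh1r : (1:ℝ) ≤ (h:ℝ) := by exact_mod_cast hh1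
  have hhm : h < m := by
    have hk : α * mr < 1 * mr := mul_lt_mul_of_pos_right hα1 hmr0
    have hfin : (h:ℝ) < mr := by rw [one_mul] at hk; linarith
    rw [hmrdef] at hfin
    exact_mod_cast hfin
  have hlogN0 : 0 ≤ Real.log N := Real.log_nonneg (by exact_mod_cast (by omega : 1 ≤ N))
  have hM_le : (M:ℝ) ≤ C₂ * Real.log N := Nat.floor_le (by positivity)
  have hM_gt : C₂ * Real.log N - 1 < (M:ℝ) := Nat.sub_one_lt_floor _
  set i₁ : ℕ := ⌈β₀ * mr⌉₊ with hi₁def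
  have hi₁_ge : β₀ * mr ≤ (i₁:ℝ) := Nat.le_ceil _
  have hi₁_lt : (i₁:ℝ) < β₀ * mr + 1 := Nat.ceil_lt_add_one (by positivity)
  have hi₁3 : 3 ≤ i₁ := by
    have h3 : (3:ℝ) ≤ (i₁:ℝ) := by
      rw [div_le_iff₀ hβ₀0] at hEe
      linarith [hi₁_ge, hEe]
    exact_mod_cast h3
  have hmrN2 : (N:ℝ)/2 ≤ mr := by
    have h2 : (2:ℝ) ≤ (N:ℝ) := by exact_mod_cast hN2
    linarith [hNmr]
  have hgap : C₂ * Real.log N + 4 ≤ (α-β₀) * mr := by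
    have h1 : (α-β₀)/2 * (N:ℝ) ≤ (α-β₀) * mr := by
      have := mul_le_mul_of_nonneg_left hmrN2 (by linarith : (0:ℝ) ≤ α-β₀)
      linarith
    linarith [hEg]
  have hi₁Mh : i₁ + M + 1 ≤ h := by
    rw [hhdef]
    apply Nat.le_floor
    push_cast
    linarith [hi₁_lt, hM_le, hgap]
  have hMh : M ≤ h := by omega
  set K : ℕ := h - M with hKdef
  have hK_cast : (K:ℝ) = (h:ℝ) - (M:ℝ) := by rw [hKdef]; push_cast [Nat.cast_sub hMh]; ring
  have hK1 : 1 ≤ K := by omega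
  have hi₁K : i₁ ≤ K := by omega
  have hKh : K ≤ h := by omega
  have hKN : K ≤ N := by omega
  have hKr : (K:ℝ) ≤ α * mr := by
    have hc1 : (K:ℝ) ≤ (h:ℝ) := by exact_mod_cast hKh
    linarith
  have hKmr : (K:ℝ) ≤ mr := by
    have := mul_le_mul_of_nonneg_right hα1.le hmr0.le
    rw [one_mul] at this
    linarith [hKr]
  have hi₁mr : (i₁:ℝ) ≤ mr := by
    have h1 : i₁ ≤ m := by omega
    rw [hmrdef]
    exact_mod_cast h1
  -- ============ UPPER BOUND ============
  have hdenpos : 0 < q*α - ρ*(1-α) := by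
    have e1 : ρ*(1-α) = qi*α := by rw [hqidef]; field_simp
    rw [e1]
    have hq2 : qi < q := by rw [hqdef]; linarith
    have := mul_lt_mul_of_pos_right hq2 hα0
    linarith
  have hEd' : ρ ≤ mr * (q*α - ρ*(1-α)) := by
    rw [div_le_iff₀ hdenpos] at hEd
    linarith [hEd]
  have hstep : ∀ t : ℕ, h ≤ t → t < m → ρ * (mr - (t:ℝ)) ≤ q * ((t:ℝ) + 1) := by
    intro t ht htm
    have htr : (h:ℝ) ≤ (t:ℝ) := by exact_mod_cast ht
    have k1 : ρ * (mr - (t:ℝ)) ≤ ρ * ((1-α)*mr + 1) := by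
      apply mul_le_mul_of_nonneg_left _ hρ0.le
      linarith [hh_gt, htr]
    have k2 : ρ * ((1-α)*mr + 1) ≤ q*α*mr := by linarith [hEd']
    have k3 : q*α*mr ≤ q * ((h:ℝ)+1) := by
      have := mul_le_mul_of_nonneg_left (by linarith [hh_gt] : α*mr ≤ (h:ℝ)+1) hq0.le
      linarith
    have k4 : q * ((h:ℝ)+1) ≤ q * ((t:ℝ)+1) := by
      apply mul_le_mul_of_nonneg_left _ hq0.le
      linarith
    linarith
  have hbh : MHB.b ρ m h ≤ 1 - q := by
    have hs := MHB.b_upper_stirling hρ0 hh1 hhm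
    have hx1 : α/2 ≤ (h:ℝ)/mr := by
      rw [le_div_iff₀ hmr0]
      linarith [hh_gt, hαmr2]
    have hx2 : (h:ℝ)/mr ≤ α := by rw [div_le_iff₀ hmr0]; linarith [hh_le]
    have hfe := MHB.fent_near_alpha hρ0 hα0 hα1 hsol hx1 hx2
    have hexp : mr * MHB.fent ρ ((h:ℝ)/mr) ≤ Cf := by
      have k1 : mr * MHB.fent ρ ((h:ℝ)/mr) ≤ mr * ((α - (h:ℝ)/mr) * Cf) := by
        apply mul_le_mul_of_nonneg_left _ hmr0.le
        rw [hCfdef]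
        exact hfe
      have k2 : mr * ((α - (h:ℝ)/mr) * Cf) = (α*mr - (h:ℝ)) * Cf := by
        field_simp
      have k3 : (α*mr - (h:ℝ)) * Cf ≤ 1 * Cf := by
        apply mul_le_mul_of_nonneg_right _ hCf0
        linarith [hh_gt]
      rw [k2] at k1
      rw [one_mul] at k3
      exact k1.trans k3
    have hmh_cast : ((m-h:ℕ):ℝ) = mr - (h:ℝ) := by
      push_cast [Nat.cast_sub hhm.le]
      ring
    have hsh : Real.sqrt (α/2) * Real.sqrt mr ≤ Real.sqrt (h:ℝ) := by
      rw [← Real.sqrt_mul (by positivity)]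
      apply Real.sqrt_le_sqrt
      rw [le_div_iff₀ hmr0] at hx1
      linarith [hx1]
    have hsmh : Real.sqrt (1-α) * Real.sqrt mr ≤ Real.sqrt ((m-h:ℕ):ℝ) := by
      rw [← Real.sqrt_mul h1α.le, hmh_cast]
      apply Real.sqrt_le_sqrt
      linarith [hh_le]
    have hsmr0 : 0 < Real.sqrt mr := Real.sqrt_pos.mpr hmr0
    have hsq : Real.sqrt mr / (Real.sqrt (h:ℝ) * Real.sqrt ((m-h:ℕ):ℝ))
        ≤ Real.sqrt mr / (Real.sqrt (α/2) * Real.sqrt (1-α) * mr) := by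
      apply div_le_div_of_nonneg_left (Real.sqrt_nonneg _) (by positivity)
      have hmre : (Real.sqrt mr)*(Real.sqrt mr) = mr := Real.mul_self_sqrt hmr0.le
      calc Real.sqrt (α/2) * Real.sqrt (1-α) * mr
          = (Real.sqrt (α/2) * Real.sqrt mr) * (Real.sqrt (1-α) * Real.sqrt mr) := by
            linear_combination (Real.sqrt (α/2) * Real.sqrt (1-α)) * hmre.symm
      _ ≤ Real.sqrt (h:ℝ) * Real.sqrt ((m-h:ℕ):ℝ) := by
            apply mul_le_mul hsh hsmh (by positivity) (Real.sqrt_nonneg _)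
    have hsq2 : Real.sqrt mr / (Real.sqrt (α/2) * Real.sqrt (1-α) * mr)
        = 1 / (Real.sqrt (α/2) * Real.sqrt (1-α) * Real.sqrt mr) := by
      have hmre : (Real.sqrt mr)*(Real.sqrt mr) = mr := Real.mul_self_sqrt hmr0.le
      rw [div_eq_div_iff (by positivity) (by positivity)]
      linear_combination (Real.sqrt (α/2) * Real.sqrt (1-α)) * hmre
    have hKstm : MHB.b ρ m h ≤ Kst / Real.sqrt mr := by
      have e0 := Real.pi_pos
      calc MHB.b ρ m h
          ≤ Real.exp 1 / (2*π) * (Real.sqrt mr / (Real.sqrt (h:ℝ) * Real.sqrt ((m-h:ℕ):ℝ))) *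
            Real.exp (mr * MHB.fent ρ ((h:ℝ)/mr)) := hs
      _ ≤ Real.exp 1 / (2*π) * (1 / (Real.sqrt (α/2) * Real.sqrt (1-α) * Real.sqrt mr)) *
            Real.exp Cf := by
          apply mul_le_mul
          · apply mul_le_mul_of_nonneg_left (hsq.trans (le_of_eq hsq2)) (by positivity)
          · exact Real.exp_le_exp.mpr hexp
          · positivity
          · positivity
      _ = Kst / Real.sqrt mr := by
          rw [hKstdef, mul_right_comm, mul_one_div, ← div_div]
    have hsqrt_big : 2*Kst/(1-qi) ≤ Real.sqrt mr := by
      have hy0 : 0 < 2*Kst/(1-qi) := div_pos (by linarith) (by linarith)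
      by_contra hcon
      push_neg at hcon
      have hlt := mul_self_lt_mul_self (Real.sqrt_nonneg mr) hcon
      rw [Real.mul_self_sqrt hmr0.le] at hlt
      nlinarith only [hEf, hlt]
    have hfin : Kst / Real.sqrt mr ≤ (1-qi)/2 := by
      rw [div_le_iff₀ hsmr0]
      have e2 : (0:ℝ) < 1 - qi := by linarith
      rw [div_le_iff₀ e2] at hsqrt_big
      linarith [hsqrt_big]
    rw [hqgap]
    linarith [hKstm, hfin]
  have hupper : EH ρ N ≤ (h:ℝ) + 1 := by
    apply MHB.EH_upper hρ0 hq0.le hq1 hh1 (by omega : h + 1 ≤ N - 1) _ _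
    · intro t ht htm
      exact hstep t ht htm
    · exact hbh
  -- ============ LOWER BOUND ============
  have hbh_low : (mr+1)⁻¹ ≤ MHB.b ρ m h :=
    MHB.b_floor_lower hρ0 hα0 hα1 hsol hh1 hhm hh_le
  have hgstep : ∀ t : ℕ, i₁ ≤ t → t < h → g * (ρ * (mr - (t:ℝ))) ≤ (t:ℝ) + 1 := by
    intro t ht htl
    have htr : (i₁:ℝ) ≤ (t:ℝ) := by exact_mod_cast ht
    have ht0 : (0:ℝ) ≤ (t:ℝ) := by positivity
    have k1 : g * (ρ * (mr - (t:ℝ))) ≤ g * (ρ * mr) := by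
      apply mul_le_mul_of_nonneg_left _ hg0.le
      have := mul_le_mul_of_nonneg_left (by linarith : mr - (t:ℝ) ≤ mr) hρ0.le
      linarith
    have k2 : g * (ρ * mr) = β₀ * mr := by rw [hβ₀def]; ring
    linarith [hi₁_ge, htr, k1, k2]
  have hgeom := MHB.b_ge_geom hρ0 hg0.le hhm.le hgstep
  have hr_near : ∀ i : ℕ, i₁ ≤ i → i ≤ h → rfun ρ N i ≤ (mr+1) * z^(h-i) := by
    intro i hi1 hih
    have hb := hgeom i hi1 hih
    have hbl : (mr+1)⁻¹ * g^(h-i) ≤ MHB.b ρ m i := by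
      calc (mr+1)⁻¹ * g^(h-i) ≤ MHB.b ρ m h * g^(h-i) := by
            apply mul_le_mul_of_nonneg_right hbh_low (by positivity)
      _ ≤ MHB.b ρ m i := hb
    have h2 : 0 < (mr+1)⁻¹ * g^(h-i) := by positivity
    rw [MHB.rfun_eq]
    calc (MHB.b ρ (N-1) i)⁻¹ ≤ ((mr+1)⁻¹ * g^(h-i))⁻¹ := inv_anti₀ h2 hbl
    _ = (mr+1) * z^(h-i) := by
        rw [mul_inv, inv_inv, hzg, inv_pow]
  have hsplitA : ∑ i ∈ Finset.Ico 1 i₁, rfun ρ N i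
      = (∑ i ∈ Finset.Ico 1 3, rfun ρ N i) + ∑ i ∈ Finset.Ico 3 i₁, rfun ρ N i :=
    (Finset.sum_Ico_consecutive _ (by norm_num) hi₁3).symm
  have hsplitB : ∑ i ∈ Finset.Ico 1 K, rfun ρ N i
      = (∑ i ∈ Finset.Ico 1 i₁, rfun ρ N i) + ∑ i ∈ Finset.Ico i₁ K, rfun ρ N i :=
    (Finset.sum_Ico_consecutive _ (by omega) hi₁K).symm
  have hS1 : ∑ i ∈ Finset.Ico 1 3, rfun ρ N i = rfun ρ N 1 + rfun ρ N 2 := by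
    rw [Finset.sum_Ico_eq_sum_range]
    norm_num [Finset.sum_range_succ]
  have hb1v : MHB.b ρ m 1 = ρ * mr := by
    simp [MHB.b, Nat.choose_one_right, hmrdef]
  have hb2v : MHB.b ρ m 2 = ρ^2 * (mr*(mr-1)) / 2 := by
    have hs := MHB.b_succ (ρ := ρ) (m := m) (i := 1) (by omega)
    push_cast at hs
    rw [hb1v] at hs
    linarith [hs]
  have hb3v : MHB.b ρ m 3 = ρ^3 * (mr*(mr-1)*(mr-2)) / 6 := by
    have hs := MHB.b_succ (ρ := ρ) (m := m) (i := 2) (by omega)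
    push_cast at hs
    rw [hb2v] at hs
    linarith [hs]
  have hr1 : (K:ℝ) * rfun ρ N 1 ≤ α/ρ := by
    rw [MHB.rfun_eq, hb1v]
    have e : α/ρ = (α*mr) * (ρ*mr)⁻¹ := by field_simp
    rw [e]
    apply mul_le_mul_of_nonneg_right hKr (by positivity)
  have hr2 : (K:ℝ) * rfun ρ N 2 ≤ α/ρ^2 := by
    rw [MHB.rfun_eq, hb2v]
    have hX : (0:ℝ) < ρ^2 * (mr*(mr-1))/2 := by
      have := mul_pos (pow_pos hρ0 2) (mul_pos hmr0 (by linarith : (0:ℝ) < mr - 1))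
      linarith
    have h1 : (K:ℝ) * (ρ^2 * (mr*(mr-1))/2)⁻¹ ≤ (α*mr) * (ρ^2 * (mr*(mr-1))/2)⁻¹ := by
      apply mul_le_mul_of_nonneg_right hKr (by positivity)
    have h2 : (α*mr) * (ρ^2 * (mr*(mr-1))/2)⁻¹ = 2*α/(ρ^2*(mr-1)) := by
      have hY : (0:ℝ) < ρ^2 * (mr*(mr-1)) :=
        mul_pos (pow_pos hρ0 2) (mul_pos hmr0 (by linarith))
      rw [inv_div, mul_div_assoc', div_eq_div_iff hY.ne' (mul_pos (pow_pos hρ0 2) (by linarith : (0:ℝ) < mr - 1)).ne']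
      ring
    have h3 : 2*α/(ρ^2*(mr-1)) ≤ α/ρ^2 := by
      have hbase : (0:ℝ) < ρ^2*(mr-1) :=
        mul_pos (pow_pos hρ0 2) (by linarith)
      rw [div_le_div_iff₀ hbase (by positivity)]
      have hnn : (0:ℝ) ≤ (α*ρ^2)*(mr-3) :=
        mul_nonneg (mul_nonneg hα0.le (pow_pos hρ0 2).le) (by linarith)
      nlinarith only [hnn]
    linarith [h1, h2 ▸ h1, h3]
  -- far region
  have hfar_pt : ∀ i ∈ Finset.Ico 3 i₁, rfun ρ N i ≤ rfun ρ N 3 + rfun ρ N i₁ := by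
    intro i hi
    obtain ⟨hi3, hii₁⟩ := Finset.mem_Ico.mp hi
    have hi₁m : i₁ ≤ m := by omega
    have him : i ≤ m := by omega
    have hbi0 : 0 < MHB.b ρ m i := MHB.b_pos hρ0 him
    have hb30 : 0 < MHB.b ρ m 3 := MHB.b_pos hρ0 (by omega)
    have hbi₁0 : 0 < MHB.b ρ m i₁ := MHB.b_pos hρ0 hi₁m
    have hr3 : 0 ≤ rfun ρ N 3 := MHB.rfun_nonneg hρ0 N 3
    have hri₁ : 0 ≤ rfun ρ N i₁ := MHB.rfun_nonneg hρ0 N i₁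
    by_cases hcase : (i:ℝ) ≤ ρ * (mr - ((i:ℝ)-1))
    · have hmono : MHB.b ρ m 3 ≤ MHB.b ρ m i := by
        apply MHB.b_mono_of_steps hρ0 hi3 him
        intro t ht htl
        have h1 : (t:ℝ) + 1 ≤ (i:ℝ) := by exact_mod_cast htl
        have h2 : (t:ℝ) ≤ (i:ℝ) - 1 := by linarith
        have h3 : ρ * (mr - ((i:ℝ)-1)) ≤ ρ * (mr - (t:ℝ)) := by
          apply mul_le_mul_of_nonneg_left _ hρ0.le
          linarith
        linarith [hcase]
      have : rfun ρ N i ≤ rfun ρ N 3 := by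
        rw [MHB.rfun_eq, MHB.rfun_eq]
        exact inv_anti₀ hb30 hmono
      linarith
    · push_neg at hcase
      have hanti : MHB.b ρ m i₁ ≤ MHB.b ρ m i := by
        apply MHB.b_anti_of_steps hρ0 hii₁.le hi₁m
        intro t ht htl
        have h1 : (i:ℝ) ≤ (t:ℝ) := by exact_mod_cast ht
        have h2 : ρ * (mr - (t:ℝ)) ≤ ρ * (mr - ((i:ℝ)-1)) := by
          apply mul_le_mul_of_nonneg_left _ hρ0.le
          linarith
        have h3 : (i:ℝ) ≤ (t:ℝ) + 1 := by linarith
        linarith [hcase]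
      have : rfun ρ N i ≤ rfun ρ N i₁ := by
        rw [MHB.rfun_eq, MHB.rfun_eq]
        exact inv_anti₀ hbi₁0 hanti
      linarith
  have hfar_card : ∑ i ∈ Finset.Ico 3 i₁, rfun ρ N i ≤ (i₁:ℝ) * (rfun ρ N 3 + rfun ρ N i₁) := by
    have hnn : 0 ≤ rfun ρ N 3 + rfun ρ N i₁ := by
      have := MHB.rfun_nonneg hρ0 N 3
      have := MHB.rfun_nonneg hρ0 N i₁
      linarith
    calc ∑ i ∈ Finset.Ico 3 i₁, rfun ρ N i
        ≤ ∑ _i ∈ Finset.Ico 3 i₁, (rfun ρ N 3 + rfun ρ N i₁) := Finset.sum_le_sum hfar_pt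
    _ = ((i₁ - 3:ℕ):ℝ) * (rfun ρ N 3 + rfun ρ N i₁) := by
        rw [Finset.sum_const, Nat.card_Ico, nsmul_eq_mul]
    _ ≤ (i₁:ℝ) * (rfun ρ N 3 + rfun ρ N i₁) := by
        apply mul_le_mul_of_nonneg_right _ hnn
        exact_mod_cast Nat.sub_le i₁ 3
  have hr3b : rfun ρ N 3 ≤ 6/(ρ^3*(mr-2)^3) := by
    rw [MHB.rfun_eq, hb3v]
    have f1 : (0:ℝ) < mr - 2 := by linarith
    have f2 : (mr-2)^3 ≤ mr*(mr-1)*(mr-2) := by nlinarith only [f1, hmr3]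
    have hlow : ρ^3*(mr-2)^3/6 ≤ ρ^3 * (mr*(mr-1)*(mr-2)) / 6 := by
      have := mul_le_mul_of_nonneg_left f2 (pow_pos hρ0 3).le
      linarith
    have h2 : (0:ℝ) < ρ^3*(mr-2)^3/6 := by
      have := mul_pos (pow_pos hρ0 3) (pow_pos f1 3)
      linarith
    calc (ρ^3 * (mr*(mr-1)*(mr-2)) / 6)⁻¹ ≤ (ρ^3*(mr-2)^3/6)⁻¹ := inv_anti₀ h2 hlow
    _ = 6/(ρ^3*(mr-2)^3) := by
        rw [inv_div]
  have hzhi : z^(h-i₁) ≤ rb^m / z^2 := by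
    have hcast : ((h-i₁:ℕ):ℝ) = (h:ℝ) - (i₁:ℝ) := by
      push_cast [Nat.cast_sub (by omega : i₁ ≤ h)]
      ring
    have hd : (α-β₀)*mr ≤ ((h-i₁:ℕ):ℝ) + 2 := by
      rw [hcast]
      have : (α-β₀)*mr = α*mr - β₀*mr := by ring
      linarith [hh_gt, hi₁_lt]
    have e1 : z^(h-i₁+2) ≤ rb^m := by
      have l1 : z^(h-i₁+2) = Real.exp (((h-i₁+2:ℕ):ℝ) * (-(3*c/4))) := by
        rw [hzdef, ← Real.exp_nat_mul]
      have l2 : rb^m = Real.exp ((m:ℝ) * (-(3*c/4)*(α-β₀))) := by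
        rw [hrbdef, ← Real.exp_nat_mul]
      rw [l1, l2]
      apply Real.exp_le_exp.mpr
      have hc34 : (0:ℝ) < 3*c/4 := by linarith
      have hd2 : (α-β₀)*mr ≤ ((h-i₁+2:ℕ):ℝ) := by
        push_cast
        linarith [hd]
      have := mul_le_mul_of_nonneg_left hd2 hc34.le
      linarith
    have e2 : z^(h-i₁) = z^(h-i₁+2)/z^2 := by
      rw [pow_add]
      field_simp
    rw [e2]
    apply div_le_div_of_nonneg_right e1 (by positivity)
  have hri₁b : rfun ρ N i₁ ≤ (mr+1) * (rb^m / z^2) := by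
    have h1 := hr_near i₁ le_rfl (by omega)
    calc rfun ρ N i₁ ≤ (mr+1) * z^(h-i₁) := h1
    _ ≤ (mr+1) * (rb^m / z^2) := by
        apply mul_le_mul_of_nonneg_left hzhi (by positivity)
  have hfar_tot : (K:ℝ) * ∑ i ∈ Finset.Ico 3 i₁, rfun ρ N i ≤ α/(2*ρ^2) + α/(2*ρ^2) := by
    have hK0 : (0:ℝ) ≤ (K:ℝ) := by positivity
    have hsum_nn : 0 ≤ ∑ i ∈ Finset.Ico 3 i₁, rfun ρ N i :=
      Finset.sum_nonneg fun i _ => MHB.rfun_nonneg hρ0 N i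
    have step1 : (K:ℝ) * ∑ i ∈ Finset.Ico 3 i₁, rfun ρ N i
        ≤ mr * ((i₁:ℝ) * (rfun ρ N 3 + rfun ρ N i₁)) := by
      calc (K:ℝ) * ∑ i ∈ Finset.Ico 3 i₁, rfun ρ N i
          ≤ (K:ℝ) * ((i₁:ℝ) * (rfun ρ N 3 + rfun ρ N i₁)) :=
            mul_le_mul_of_nonneg_left hfar_card hK0
      _ ≤ mr * ((i₁:ℝ) * (rfun ρ N 3 + rfun ρ N i₁)) := by
            apply mul_le_mul_of_nonneg_right hKmr
            have := MHB.rfun_nonneg hρ0 N 3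
            have := MHB.rfun_nonneg hρ0 N i₁
            positivity
    have step2 : mr * ((i₁:ℝ) * (rfun ρ N 3 + rfun ρ N i₁))
        ≤ mr * mr * rfun ρ N 3 + mr * mr * rfun ρ N i₁ := by
      have h3nn := MHB.rfun_nonneg hρ0 N 3
      have hi₁nn := MHB.rfun_nonneg hρ0 N i₁
      have := mul_nonneg (mul_nonneg hmr0.le (by linarith [hi₁mr] : (0:ℝ) ≤ mr - (i₁:ℝ)))
        (add_nonneg h3nn hi₁nn)
      nlinarith only [this, hmr0, h3nn, hi₁nn]
    have piece1 : mr * mr * rfun ρ N 3 ≤ α/(2*ρ^2) := by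
      have w1 : (2/3)*mr ≤ mr - 2 := by linarith [hEb]
      have w2 : ((2/3)*mr)^3 ≤ (mr-2)^3 := by
        apply pow_le_pow_left₀ (by positivity) w1
      have key : mr * mr * (6/(ρ^3*(mr-2)^3)) ≤ α/(2*ρ^2) := by
        have f1 : (0:ℝ) < mr - 2 := by linarith
        have hden1 : (0:ℝ) < ρ^3*(mr-2)^3 := mul_pos (pow_pos hρ0 3) (pow_pos f1 3)
        rw [mul_div_assoc', div_le_div_iff₀ hden1 (by positivity)]
        have e42 : 42 ≤ ρ*α*mr := by
          rw [div_le_iff₀ (by positivity)] at hEc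
          linarith [hEc]
        have w2' : (8/27)*mr^3 ≤ (mr-2)^3 := by nlinarith only [w2]
        have A1 : (α*ρ^3) * ((8/27)*mr^3) ≤ (α*ρ^3) * (mr-2)^3 :=
          mul_le_mul_of_nonneg_left w2' (by positivity)
        have A2 : 42 * ((8/27)*ρ^2*mr^2) ≤ (ρ*α*mr) * ((8/27)*ρ^2*mr^2) :=
          mul_le_mul_of_nonneg_right e42 (by positivity)
        nlinarith only [A1, A2, mul_pos (mul_pos hρ0 hρ0) hmr0, sq_nonneg mr, hmr0]
      calc mr * mr * rfun ρ N 3 ≤ mr * mr * (6/(ρ^3*(mr-2)^3)) := by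
            apply mul_le_mul_of_nonneg_left hr3b (by positivity)
      _ ≤ α/(2*ρ^2) := key
    have piece2 : mr * mr * rfun ρ N i₁ ≤ α/(2*ρ^2) := by
      have key : mr * mr * ((mr+1) * (rb^m / z^2)) ≤ α/(2*ρ^2) := by
        have e1 : mr * mr * ((mr+1) * (rb^m / z^2)) ≤ (1/z^2) * ((mr+1)^3 * rb^m) := by
          have hrbm : (0:ℝ) ≤ rb^m := by positivity
          have hz2 : (0:ℝ) < z^2 := by positivity
          have g1 : mr*mr*(mr+1) ≤ (mr+1)^3 := by nlinarith only [hmr0, sq_nonneg mr]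
          have g2 : (0:ℝ) ≤ rb^m * (z^2)⁻¹ := by positivity
          have g3 := mul_le_mul_of_nonneg_right g1 g2
          rw [div_eq_mul_inv, one_div]
          nlinarith only [g3]
        calc mr * mr * ((mr+1) * (rb^m / z^2)) ≤ (1/z^2) * ((mr+1)^3 * rb^m) := e1
        _ ≤ α/(2*ρ^2) := hEh
      calc mr * mr * rfun ρ N i₁ ≤ mr * mr * ((mr+1) * (rb^m / z^2)) := by
            apply mul_le_mul_of_nonneg_left hri₁b (by positivity)
      _ ≤ α/(2*ρ^2) := key
    linarith [step1, step2, piece1, piece2]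
  -- near region
  have hgeo_sum : ∑ i ∈ Finset.Ico i₁ K, z^(K-1-i) ≤ (1-z)⁻¹ := by
    rw [Finset.sum_Ico_eq_sum_range]
    have hcongr : ∀ t ∈ Finset.range (K - i₁), z^(K-1-(i₁+t)) = z^((K-i₁)-1-t) := by
      intro t ht
      congr 1
      have := Finset.mem_range.mp ht
      omega
    rw [Finset.sum_congr rfl hcongr]
    rw [Finset.sum_range_reflect (fun j => z^j) (K-i₁)]
    exact MHB.geom_sum_le_inv hz0.le hz1 _
  have hnear_sum : ∑ i ∈ Finset.Ico i₁ K, rfun ρ N i ≤ (mr+1) * z^(M+1) * (1-z)⁻¹ := by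
    have hpt : ∀ i ∈ Finset.Ico i₁ K, rfun ρ N i ≤ (mr+1) * z^(M+1) * z^(K-1-i) := by
      intro i hi
      obtain ⟨hi1, hiK⟩ := Finset.mem_Ico.mp hi
      have h1 := hr_near i hi1 (by omega)
      have he : h - i = (M+1) + (K-1-i) := by omega
      rw [he, pow_add] at h1
      calc rfun ρ N i ≤ (mr+1) * (z^(M+1) * z^(K-1-i)) := h1
      _ = (mr+1) * z^(M+1) * z^(K-1-i) := by ring
    calc ∑ i ∈ Finset.Ico i₁ K, rfun ρ N i
        ≤ ∑ i ∈ Finset.Ico i₁ K, (mr+1) * z^(M+1) * z^(K-1-i) := Finset.sum_le_sum hpt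
    _ = (mr+1) * z^(M+1) * ∑ i ∈ Finset.Ico i₁ K, z^(K-1-i) := by rw [← Finset.mul_sum]
    _ ≤ (mr+1) * z^(M+1) * (1-z)⁻¹ := by
        apply mul_le_mul_of_nonneg_left hgeo_sum (by positivity)
  have hnear_tot : (K:ℝ) * ∑ i ∈ Finset.Ico i₁ K, rfun ρ N i ≤ α/ρ^2 := by
    have hzM : z^M ≤ Real.exp (3*c/4) * Real.exp (-(9/4)*Real.log N) := by
      have l1 : z^M = Real.exp ((M:ℝ) * (-(3*c/4))) := by
        rw [hzdef, ← Real.exp_nat_mul]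
      rw [l1, ← Real.exp_add]
      apply Real.exp_le_exp.mpr
      have hcC : (3*c/4) * C₂ = 9/4 := by
        rw [hC₂]
        field_simp
        ring
      have e9 : (3*c/4)*(C₂*Real.log N) = (9/4)*Real.log N := by
        calc (3*c/4)*(C₂*Real.log N) = ((3*c/4)*C₂)*Real.log N := by ring
        _ = (9/4)*Real.log N := by rw [hcC]
      have e10 := mul_lt_mul_of_pos_left hM_gt (by linarith : (0:ℝ) < 3*c/4)
      nlinarith only [e9, e10]
    have h3 : mr*(mr+1) ≤ (N:ℝ)^2 := by
      have e : mr*(mr+1) = (N:ℝ)^2 - (N:ℝ) := by rw [← hNmr]; ring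
      have : (0:ℝ) ≤ (N:ℝ) := by positivity
      linarith
    have hNlog0 : (0:ℝ) < Real.exp (-(9/4)*Real.log N) := Real.exp_pos _
    have hinvz : (0:ℝ) < (1-z)⁻¹ := by
      apply inv_pos.mpr
      linarith
    have chain : (K:ℝ) * ∑ i ∈ Finset.Ico i₁ K, rfun ρ N i
        ≤ ((1-z)⁻¹ * z * Real.exp (3*c/4)) * ((N:ℝ)^2 * Real.exp (-(9/4)*Real.log N)) := by
      have s1 : (K:ℝ) * ∑ i ∈ Finset.Ico i₁ K, rfun ρ N i
          ≤ mr * ((mr+1) * z^(M+1) * (1-z)⁻¹) := by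
        calc (K:ℝ) * ∑ i ∈ Finset.Ico i₁ K, rfun ρ N i
            ≤ (K:ℝ) * ((mr+1) * z^(M+1) * (1-z)⁻¹) := by
              apply mul_le_mul_of_nonneg_left hnear_sum (by positivity)
        _ ≤ mr * ((mr+1) * z^(M+1) * (1-z)⁻¹) := by
              apply mul_le_mul_of_nonneg_right hKmr (by positivity)
      have s2 : mr * ((mr+1) * z^(M+1) * (1-z)⁻¹)
          = (mr*(mr+1)) * ((1-z)⁻¹ * z) * z^M := by
        rw [pow_succ]
        ring
      have s3 : (mr*(mr+1)) * ((1-z)⁻¹ * z) * z^M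
          ≤ ((N:ℝ)^2) * ((1-z)⁻¹ * z) * (Real.exp (3*c/4) * Real.exp (-(9/4)*Real.log N)) := by
        have f1 : (mr*(mr+1)) * ((1-z)⁻¹ * z) ≤ ((N:ℝ)^2) * ((1-z)⁻¹ * z) := by
          apply mul_le_mul_of_nonneg_right h3 (by positivity)
        have f2 : (0:ℝ) ≤ ((N:ℝ)^2) * ((1-z)⁻¹ * z) := by positivity
        have f3 : (0:ℝ) ≤ z^M := by positivity
        calc (mr*(mr+1)) * ((1-z)⁻¹ * z) * z^M
            ≤ ((N:ℝ)^2) * ((1-z)⁻¹ * z) * z^M := mul_le_mul_of_nonneg_right f1 f3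
        _ ≤ ((N:ℝ)^2) * ((1-z)⁻¹ * z) * (Real.exp (3*c/4) * Real.exp (-(9/4)*Real.log N)) :=
            mul_le_mul_of_nonneg_left hzM f2
      calc (K:ℝ) * ∑ i ∈ Finset.Ico i₁ K, rfun ρ N i
          ≤ mr * ((mr+1) * z^(M+1) * (1-z)⁻¹) := s1
      _ = (mr*(mr+1)) * ((1-z)⁻¹ * z) * z^M := s2
      _ ≤ ((N:ℝ)^2) * ((1-z)⁻¹ * z) * (Real.exp (3*c/4) * Real.exp (-(9/4)*Real.log N)) := s3
      _ = ((1-z)⁻¹ * z * Real.exp (3*c/4)) * ((N:ℝ)^2 * Real.exp (-(9/4)*Real.log N)) := by ring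
    linarith [chain, hEi]
  -- combine
  have hKRtot : (K:ℝ) * ∑ i ∈ Finset.Ico 1 K, rfun ρ N i ≤ C₃ := by
    rw [hsplitB, hsplitA, hS1]
    have hexp : (K:ℝ) * ((rfun ρ N 1 + rfun ρ N 2) + ∑ i ∈ Finset.Ico 3 i₁, rfun ρ N i
          + ∑ i ∈ Finset.Ico i₁ K, rfun ρ N i)
        = (K:ℝ)*rfun ρ N 1 + (K:ℝ)*rfun ρ N 2 + (K:ℝ)*∑ i ∈ Finset.Ico 3 i₁, rfun ρ N i
          + (K:ℝ)*∑ i ∈ Finset.Ico i₁ K, rfun ρ N i := by ring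
    rw [hexp]
    have hCeq : C₃ = α/ρ + α/ρ^2 + (α/(2*ρ^2) + α/(2*ρ^2)) + α/ρ^2 := by
      rw [hC₃]
      field_simp
      ring
    rw [hCeq]
    linarith [hr1, hr2, hfar_tot, hnear_tot]
  have hlow := MHB.EH_lower hρ0 hK1 hKN hKRtot
  constructor
  · rw [hgoalh]
    have heq : (h:ℝ) - (M:ℝ) - C₃ = (K:ℝ) - C₃ := by rw [hK_cast]
    rw [heq]
    exact hlow
  · rw [hgoalh]
    exact hupper
end

section
/- Let ρ ≥ 1. Then for all sufficiently large N, N − 4 ≤ E(H_N) ≤ N. -/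
open Finset Filter Real Topology

/-- key identity: `(n+1-i) C(n+1,i) = (n+1) C(n,i)`. -/
lemma key_identity (n i : ℕ) (hi : i ≤ n) :
    (n + 1 - i) * Nat.choose (n + 1) i = (n + 1) * Nat.choose n i := by
  have h := Nat.add_one_mul_choose_eq n (n - i)
  rw [Nat.choose_symm hi] at h
  have h2 : Nat.choose (n + 1) (n - i + 1) = Nat.choose (n + 1) i := by
    rw [show n - i + 1 = (n + 1) - i by omega, Nat.choose_symm (by omega)]
  rw [h2] at h
  rw [show n + 1 - i = n - i + 1 by omega, mul_comm]
  exact h.symm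

lemma choose_mono_half (N a : ℕ) : ∀ b, a ≤ b → b ≤ N / 2 → N.choose a ≤ N.choose b := by
  intro b
  induction b with
  | zero =>
    intro h _
    have : a = 0 := by omega
    subst this; exact le_rfl
  | succ m ih =>
    intro hab hb
    rcases lt_or_ge a (m + 1) with h | h
    · exact (ih (by omega) (by omega)).trans
        (Nat.choose_le_succ_of_lt_half_left (by omega))
    · have : a = m + 1 := by omega
      subst this; exact le_rfl

lemma choose_two_le (N i : ℕ) (h2 : 2 ≤ i) (hi : i ≤ N - 2) (hN : 5 ≤ N) :
    N.choose 2 ≤ N.choose i := by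
  rcases le_or_gt i (N / 2) with h | h
  · exact choose_mono_half N 2 i h2 h
  · have hsym : N.choose i = N.choose (N - i) := (Nat.choose_symm (by omega)).symm
    rw [hsym]
    exact choose_mono_half N 2 (N - i) (by omega) (by omega)

lemma two_mul_choose_two (N : ℕ) (hN : 1 ≤ N) : 2 * N.choose 2 = N * (N - 1) := by
  have h := Nat.choose_two_right N
  have hdvd : 2 ∣ N * (N - 1) := by
    obtain ⟨m, hm⟩ := Nat.even_mul_succ_self (N - 1)
    have hc : N * (N - 1) = (N - 1) * (N - 1 + 1) := by
      rw [show N - 1 + 1 = N by omega, Nat.mul_comm]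
    exact ⟨m, by omega⟩
  omega

lemma swap_sum (f : ℕ → ℝ) (N : ℕ) :
    ∑ k ∈ Finset.Icc 1 N, ∑ i ∈ Finset.range k, f i
      = ∑ i ∈ Finset.range N, ((N : ℝ) - i) * f i := by
  induction N with
  | zero => simp
  | succ n ih =>
    rw [Finset.sum_Icc_succ_top (by omega), ih]
    have hsplit : ∀ i : ℕ, (((n : ℕ) + 1 : ℕ) : ℝ) - i = ((n : ℝ) - i) + 1 := by
      intro i; push_cast; ring
    have : ∑ i ∈ Finset.range (n + 1), (((n + 1 : ℕ) : ℝ) - i) * f i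
        = ∑ i ∈ Finset.range (n + 1), (((n : ℝ) - i) * f i + f i) := by
      apply Finset.sum_congr rfl
      intro i _
      rw [hsplit]; ring
    rw [this, Finset.sum_add_distrib,
      Finset.sum_range_succ (fun i => ((n : ℝ) - i) * f i)]
    simp

theorem mean_height_bounds_rho_ge_one (ρ : ℝ) (hρ : 1 ≤ ρ) :
    ∀ᶠ N : ℕ in atTop, (N : ℝ) - 4 ≤ EH ρ N ∧ EH ρ N ≤ (N : ℝ) := by
  have hρ0 : (0 : ℝ) < ρ := lt_of_lt_of_le one_pos hρ
  filter_upwards [eventually_ge_atTop 5] with N hN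
  have hr0 : rfun ρ N 0 = 1 := by simp [rfun]
  have hrnn : ∀ i, 0 ≤ rfun ρ N i := fun i =>
    inv_nonneg.mpr (mul_nonneg (pow_nonneg hρ0.le i) (Nat.cast_nonneg _))
  set s : ℕ → ℝ := fun k => ∑ i ∈ Finset.range k, rfun ρ N i with hs
  have hs1 : ∀ k, 1 ≤ k → 1 ≤ s k := by
    intro k hk
    have h := Finset.single_le_sum (f := fun i => rfun ρ N i)
      (fun i _ => hrnn i) (Finset.mem_range.mpr (by omega : 0 < k))
    simpa [hs, hr0] using h
  have htail : ∀ k ∈ Finset.Icc 1 N, tailP ρ N k = (s k)⁻¹ := by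
    intro k hk
    rw [Finset.mem_Icc] at hk
    simp [tailP, hk.2, hs]
  constructor
  · -- lower bound
    have hstep : ∀ k ∈ Finset.Icc 1 N, 2 - s k ≤ tailP ρ N k := by
      intro k hk
      rw [htail k hk]
      rw [Finset.mem_Icc] at hk
      have hsk : 0 < s k := lt_of_lt_of_le one_pos (hs1 k hk.1)
      rw [← sub_nonneg]
      have h : (s k)⁻¹ - (2 - s k) = (s k - 1) ^ 2 / s k := by
        field_simp; ring
      rw [h]; positivity
    have hEH : 2 * (N : ℝ) - ∑ k ∈ Finset.Icc 1 N, s k ≤ EH ρ N := by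
      have h := Finset.sum_le_sum hstep
      have hc : ∑ k ∈ Finset.Icc 1 N, ((2 : ℝ) - s k)
          = 2 * (N : ℝ) - ∑ k ∈ Finset.Icc 1 N, s k := by
        rw [Finset.sum_sub_distrib, Finset.sum_const, Nat.card_Icc]
        simp; ring
      rw [hc] at h; exact h
    have hswap : ∑ k ∈ Finset.Icc 1 N, s k
        = ∑ i ∈ Finset.range N, ((N : ℝ) - i) * rfun ρ N i := swap_sum _ N
    have hsplit0 : ∑ i ∈ Finset.range N, ((N : ℝ) - i) * rfun ρ N i
        = (N : ℝ) + ∑ i ∈ Finset.Ico 1 N, ((N : ℝ) - i) * rfun ρ N i := by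
      rw [Finset.sum_range_eq_add_Ico _ (by omega : 0 < N), hr0]
      push_cast; ring
    have hT : ∑ i ∈ Finset.Ico 1 N, ((N : ℝ) - i) * rfun ρ N i ≤ 4 := by
      have hterm : ∀ i ∈ Finset.Ico 1 N,
          ((N : ℝ) - i) * rfun ρ N i ≤ (N : ℝ) / (Nat.choose N i : ℝ) := by
        intro i hi
        rw [Finset.mem_Ico] at hi
        have hiN : i ≤ N - 1 := by omega
        have hc : 0 < Nat.choose (N - 1) i := Nat.choose_pos hiN
        have hcR : (0 : ℝ) < (Nat.choose (N - 1) i : ℝ) := by exact_mod_cast hc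
        have hcN : 0 < Nat.choose N i := Nat.choose_pos (by omega)
        have hcNR : (0 : ℝ) < (Nat.choose N i : ℝ) := by exact_mod_cast hcN
        have hpow : (1 : ℝ) ≤ ρ ^ i := one_le_pow₀ hρ
        have hr : rfun ρ N i ≤ (Nat.choose (N - 1) i : ℝ)⁻¹ := by
          apply inv_anti₀ hcR
          nlinarith
        have hNi : (0 : ℝ) ≤ (N : ℝ) - i := by
          have h' : (i : ℝ) ≤ N := by exact_mod_cast hi.2.le
          linarith
        have step1 : ((N : ℝ) - i) * rfun ρ N i
            ≤ ((N : ℝ) - i) * (Nat.choose (N - 1) i : ℝ)⁻¹ := by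
          nlinarith [hrnn i]
        have hid := key_identity (N - 1) i hiN
        rw [show N - 1 + 1 = N by omega] at hid
        have hid' : ((N : ℝ) - i) * (Nat.choose N i : ℝ)
            = (N : ℝ) * (Nat.choose (N - 1) i : ℝ) := by
          have hcast : ((N - i : ℕ) : ℝ) * (Nat.choose N i : ℝ)
              = (N : ℝ) * (Nat.choose (N - 1) i : ℝ) := by exact_mod_cast hid
          rw [Nat.cast_sub hi.2.le] at hcast
          exact hcast
        have step2 : ((N : ℝ) - i) * (Nat.choose (N - 1) i : ℝ)⁻¹
            = (N : ℝ) / (Nat.choose N i : ℝ) := by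
          field_simp
          linarith [hid']
        linarith [step1, step2.le]
      have h1 := Finset.sum_le_sum hterm
      have hsetsplit : Finset.Ico 1 N
          = insert 1 (insert (N - 1) (Finset.Ico 2 (N - 1))) := by
        ext x
        simp only [Finset.mem_Ico, Finset.mem_insert]
        omega
      have hNR : (0 : ℝ) < (N : ℝ) := by exact_mod_cast (by omega : 0 < N)
      have h2 : ∑ i ∈ Finset.Ico 1 N, (N : ℝ) / (Nat.choose N i : ℝ) ≤ 4 := by
        rw [hsetsplit,
          Finset.sum_insert (by simp only [Finset.mem_insert, Finset.mem_Ico]; omega),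
          Finset.sum_insert (by simp only [Finset.mem_Ico]; omega)]
        have e1 : (N : ℝ) / (Nat.choose N 1 : ℝ) = 1 := by
          rw [Nat.choose_one_right]
          exact div_self hNR.ne'
        have e2 : (N : ℝ) / (Nat.choose N (N - 1) : ℝ) = 1 := by
          rw [show Nat.choose N (N - 1) = N by
            rw [Nat.choose_symm (by omega : 1 ≤ N), Nat.choose_one_right]]
          exact div_self hNR.ne'
        have hN1 : (0 : ℝ) < (N : ℝ) - 1 := by
          have : (5 : ℝ) ≤ N := by exact_mod_cast hN
          linarith
        have hmid : ∑ i ∈ Finset.Ico 2 (N - 1), (N : ℝ) / (Nat.choose N i : ℝ) ≤ 2 := by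
          have hb : ∀ i ∈ Finset.Ico 2 (N - 1),
              (N : ℝ) / (Nat.choose N i : ℝ) ≤ 2 / ((N : ℝ) - 1) := by
            intro i hi
            rw [Finset.mem_Ico] at hi
            have hch := choose_two_le N i hi.1 (by omega) hN
            have h2c := two_mul_choose_two N (by omega)
            have hcNi : 0 < Nat.choose N i := Nat.choose_pos (by omega)
            have hcNiR : (0 : ℝ) < (Nat.choose N i : ℝ) := by exact_mod_cast hcNi
            have hnat : N * (N - 1) ≤ 2 * Nat.choose N i := by omega
            have hcast : ((N * (N - 1) : ℕ) : ℝ) ≤ ((2 * Nat.choose N i : ℕ) : ℝ) :=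
              Nat.cast_le.mpr hnat
            have hsub : ((N - 1 : ℕ) : ℝ) = (N : ℝ) - 1 := by
              rw [Nat.cast_sub (by omega : 1 ≤ N)]; simp
            rw [Nat.cast_mul, Nat.cast_mul, hsub] at hcast
            rw [div_le_div_iff₀ hcNiR hN1]
            push_cast at hcast ⊢
            linarith
          calc ∑ i ∈ Finset.Ico 2 (N - 1), (N : ℝ) / (Nat.choose N i : ℝ)
              ≤ ∑ _i ∈ Finset.Ico 2 (N - 1), 2 / ((N : ℝ) - 1) := Finset.sum_le_sum hb
            _ = ((N - 1 - 2 : ℕ) : ℝ) * (2 / ((N : ℝ) - 1)) := by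
                rw [Finset.sum_const, Nat.card_Ico]; simp
            _ ≤ ((N : ℝ) - 1) * (2 / ((N : ℝ) - 1)) := by
                have hle : ((N - 1 - 2 : ℕ) : ℝ) ≤ (N : ℝ) - 1 := by
                  have h' : ((N - 1 - 2 : ℕ) : ℝ) ≤ ((N - 1 : ℕ) : ℝ) :=
                    Nat.cast_le.mpr (by omega)
                  have hsub : ((N - 1 : ℕ) : ℝ) = (N : ℝ) - 1 := by
                    rw [Nat.cast_sub (by omega : 1 ≤ N)]; simp
                  linarith [hsub ▸ h']
                have hpos : (0 : ℝ) ≤ 2 / ((N : ℝ) - 1) := by positivity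
                exact mul_le_mul_of_nonneg_right hle hpos
            _ = 2 := by field_simp
        linarith
      linarith
    rw [hswap, hsplit0] at hEH
    linarith
  · -- upper bound
    have h : EH ρ N ≤ ∑ _k ∈ Finset.Icc 1 N, (1 : ℝ) := by
      apply Finset.sum_le_sum
      intro k hk
      rw [htail k hk]
      rw [Finset.mem_Icc] at hk
      exact inv_le_one_of_one_le₀ (hs1 k hk.1)
    simpa [Nat.card_Icc] using h
end

section
/- Let ρ ≥ 1. Then for all sufficiently large N, P(H_N ≥ N−1) ≥ (N−1)/(N+2). -/
open Finset Filter Real Topology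

lemma chooseMonoHalf (n : ℕ) : ∀ a b : ℕ, a ≤ b → b ≤ n / 2 → n.choose a ≤ n.choose b := by
  intro a b hab
  induction b, hab using Nat.le_induction with
  | base => intro _; exact le_rfl
  | succ b hb ih =>
    intro h
    exact (ih (by omega)).trans (Nat.choose_le_succ_of_lt_half_left (by omega))

lemma chooseMid {n k i : ℕ} (hk : k ≤ i) (hi : i + k ≤ n) : n.choose k ≤ n.choose i := by
  by_cases h : i ≤ n / 2
  · exact chooseMonoHalf n k i hk h
  · have hin : i ≤ n := by omega
    rw [← Nat.choose_symm hin]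
    exact chooseMonoHalf n k (n - i) (by omega) (by omega)

lemma sumInvChoose {n : ℕ} (hn : 100 ≤ n) :
    ∑ i ∈ Finset.range n, ((n.choose i : ℝ))⁻¹ ≤ 1 + 3 / (n : ℝ) := by
  have hx : (100 : ℝ) ≤ (n : ℝ) := by exact_mod_cast hn
  set x : ℝ := (n : ℝ) with hxdef
  have hx1 : ((n - 1 : ℕ) : ℝ) = x - 1 := by push_cast [Nat.cast_sub (by omega : 1 ≤ n)]; ring
  have hx2 : ((n - 2 : ℕ) : ℝ) = x - 2 := by push_cast [Nat.cast_sub (by omega : 2 ≤ n)]; ring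
  have hx5 : ((n - 5 : ℕ) : ℝ) = x - 5 := by push_cast [Nat.cast_sub (by omega : 5 ≤ n)]; ring
  have hx1pos : (0 : ℝ) < x - 1 := by linarith
  have hx2pos : (0 : ℝ) < x - 2 := by linarith
  -- choose lower bounds
  have hc2 : (x - 1) ^ 2 / 2 ≤ (n.choose 2 : ℝ) := by
    have := Nat.pow_le_choose (α := ℝ) 2 n
    simpa [show n + 1 - 2 = n - 1 by omega, hx1] using this
  have hc3 : (x - 2) ^ 3 / 6 ≤ (n.choose 3 : ℝ) := by
    have := Nat.pow_le_choose (α := ℝ) 3 n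
    have h6 : ((Nat.factorial 3 : ℕ) : ℝ) = 6 := by norm_num [Nat.factorial]
    simpa [show n + 1 - 3 = n - 2 by omega, hx2, h6] using this
  have hf2 : ((n.choose 2 : ℝ))⁻¹ ≤ 2 / (x - 1) ^ 2 := by
    rw [show (2 : ℝ) / (x - 1) ^ 2 = ((x - 1) ^ 2 / 2)⁻¹ by rw [inv_div]]
    exact inv_anti₀ (by positivity) hc2
  have hf3 : ((n.choose 3 : ℝ))⁻¹ ≤ 6 / (x - 2) ^ 3 := by
    rw [show (6 : ℝ) / (x - 2) ^ 3 = ((x - 2) ^ 3 / 6)⁻¹ by rw [inv_div]]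
    exact inv_anti₀ (by positivity) hc3
  -- decompose the range
  have hset : Finset.range n =
      insert 0 (insert 1 (insert 2 (insert (n - 2) (insert (n - 1) (Finset.Icc 3 (n - 3)))))) := by
    ext y
    simp only [Finset.mem_range, Finset.mem_insert, Finset.mem_Icc]
    omega
  rw [hset]
  rw [Finset.sum_insert (by simp only [Finset.mem_insert, Finset.mem_Icc]; omega)]
  rw [Finset.sum_insert (by simp only [Finset.mem_insert, Finset.mem_Icc]; omega)]
  rw [Finset.sum_insert (by simp only [Finset.mem_insert, Finset.mem_Icc]; omega)]
  rw [Finset.sum_insert (by simp only [Finset.mem_insert, Finset.mem_Icc]; omega)]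
  rw [Finset.sum_insert (by simp only [Finset.mem_Icc]; omega)]
  -- evaluate / bound individual terms
  have h0 : ((n.choose 0 : ℝ))⁻¹ = 1 := by simp
  have h1 : ((n.choose 1 : ℝ))⁻¹ = 1 / x := by simp [Nat.choose_one_right, one_div, hxdef]
  have hn1 : ((n.choose (n - 1) : ℝ))⁻¹ = 1 / x := by
    rw [Nat.choose_symm (by omega : 1 ≤ n), Nat.choose_one_right, one_div]
  have hn2 : ((n.choose (n - 2) : ℝ))⁻¹ ≤ 2 / (x - 1) ^ 2 := by
    rw [Nat.choose_symm (by omega : 2 ≤ n)]; exact hf2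
  have hIcc : ∑ i ∈ Finset.Icc 3 (n - 3), ((n.choose i : ℝ))⁻¹ ≤ (x - 5) * (6 / (x - 2) ^ 3) := by
    have hcard : (Finset.Icc 3 (n - 3)).card = n - 5 := by
      rw [Nat.card_Icc]; omega
    calc ∑ i ∈ Finset.Icc 3 (n - 3), ((n.choose i : ℝ))⁻¹
        ≤ (Finset.Icc 3 (n - 3)).card • (6 / (x - 2) ^ 3) := by
          apply Finset.sum_le_card_nsmul
          intro i hi
          rw [Finset.mem_Icc] at hi
          have hle : n.choose 3 ≤ n.choose i := chooseMid (by omega) (by omega)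
          have hpos : 0 < (n.choose 3 : ℝ) := by
            have := Nat.choose_pos (by omega : 3 ≤ n); exact_mod_cast this
          exact le_trans (inv_anti₀ hpos (by exact_mod_cast hle)) hf3
      _ = ((n - 5 : ℕ) : ℝ) * (6 / (x - 2) ^ 3) := by rw [hcard, nsmul_eq_mul]
      _ = (x - 5) * (6 / (x - 2) ^ 3) := by rw [hx5]
  rw [h0, h1, hn1]
  have harith : 1 / x + 1 / x + 2 / (x - 1) ^ 2 + 2 / (x - 1) ^ 2 +
      (x - 5) * (6 / (x - 2) ^ 3) ≤ 3 / x := by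
    have hA : 2 / (x - 1) ^ 2 ≤ 8 / x ^ 2 := by
      rw [div_le_div_iff₀ (by positivity) (by positivity)]
      nlinarith
    have hB : (x - 5) * (6 / (x - 2) ^ 3) ≤ 48 / x ^ 2 := by
      rw [mul_div_assoc', div_le_div_iff₀ (by positivity) (by positivity)]
      nlinarith [sq_nonneg x, sq_nonneg (x - 2), mul_pos hx2pos hx2pos]
    have hC : 8 / x ^ 2 + 8 / x ^ 2 + 48 / x ^ 2 ≤ 1 / x := by
      rw [← add_div, ← add_div, div_le_div_iff₀ (by positivity) (by positivity)]
      nlinarith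
    have h3 : 3 / x = 1 / x + 1 / x + 1 / x := by ring
    rw [h3]; linarith
  linarith [hn2, hIcc, hf2]

theorem tail_prob_near_top_rho_ge_one (ρ : ℝ) (hρ : 1 ≤ ρ) :
    ∀ᶠ N : ℕ in atTop, tailP ρ N (N - 1) ≥ ((N : ℝ) - 1) / ((N : ℝ) + 2) := by
  filter_upwards [eventually_ge_atTop 101] with N hN
  have hρ0 : (0 : ℝ) < ρ := lt_of_lt_of_le one_pos hρ
  set n := N - 1 with hndef
  have hn : 100 ≤ n := by omega
  have hxN : (101 : ℝ) ≤ (N : ℝ) := by exact_mod_cast hN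
  have hxn : ((n : ℕ) : ℝ) = (N : ℝ) - 1 := by
    rw [hndef, Nat.cast_sub (by omega : 1 ≤ N)]; norm_num
  rw [tailP, if_pos (by omega : N - 1 ≤ N)]
  have hsum_le : ∑ i ∈ Finset.range (N - 1), rfun ρ N i ≤
      ∑ i ∈ Finset.range n, ((n.choose i : ℝ))⁻¹ := by
    apply Finset.sum_le_sum
    intro i hi
    rw [Finset.mem_range] at hi
    have hcpos : (0 : ℝ) < (n.choose i : ℝ) := by
      exact_mod_cast Nat.choose_pos (by omega : i ≤ n)
    rw [rfun]
    exact inv_anti₀ hcpos (le_mul_of_one_le_left hcpos.le (one_le_pow₀ hρ))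
  have hpos : 0 < ∑ i ∈ Finset.range (N - 1), rfun ρ N i := by
    apply Finset.sum_pos
    · intro i hi
      rw [Finset.mem_range] at hi
      have hcpos : (0 : ℝ) < ((N - 1).choose i : ℝ) := by
        exact_mod_cast Nat.choose_pos (by omega : i ≤ N - 1)
      exact inv_pos.mpr (mul_pos (pow_pos hρ0 i) hcpos)
    · exact Finset.nonempty_range_iff.mpr (by omega)
  have key : ∑ i ∈ Finset.range (N - 1), rfun ρ N i ≤ ((N : ℝ) + 2) / ((N : ℝ) - 1) := by
    refine hsum_le.trans ((sumInvChoose hn).trans ?_)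
    rw [hxn]
    have h1 : (0 : ℝ) < (N : ℝ) - 1 := by linarith
    have h2 : 1 + 3 / ((N:ℝ) - 1) = ((N:ℝ) + 2) / ((N:ℝ) - 1) := by
      field_simp; ring
    rw [h2]
  have := inv_anti₀ hpos key
  rw [inv_div] at this
  exact this
end

section
/- For all sufficiently large integers n, the sum of reciprocals of binomial coefficients satisfies ∑_{i=0}^{n−2} C(n−1,i)^{−1} ≤ 1 + 3/(n−1). -/
open Finset Filter Real Topology

lemma choose_mono_half_s17 {n : ℕ} : ∀ {r s : ℕ}, r ≤ s → s ≤ n / 2 → n.choose r ≤ n.choose s := by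
  intro r s hrs
  induction s, hrs using Nat.le_induction with
  | base => intro _; exact le_rfl
  | succ s hs ih =>
    intro h
    exact le_trans (ih (by omega)) (Nat.choose_le_succ_of_lt_half_left (by omega))

lemma choose_three_le {m i : ℕ} (hm : 6 ≤ m) (h3 : 3 ≤ i) (h : i ≤ m - 3) :
    m.choose 3 ≤ m.choose i := by
  rcases le_or_gt i (m / 2) with h1 | h1
  · exact choose_mono_half_s17 h3 h1
  · rw [← Nat.choose_symm (show i ≤ m by omega)]
    exact choose_mono_half_s17 (by omega) (by omega)

set_option maxHeartbeats 1000000 in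
lemma main_bound {m : ℕ} (hm : 20 ≤ m) :
    ∑ i ∈ Finset.range m, ((Nat.choose m i : ℝ))⁻¹ ≤ 1 + 3 / (m : ℝ) := by
  set x : ℝ := (m : ℝ) with hxdef
  have hx : (20 : ℝ) ≤ x := by rw [hxdef]; exact_mod_cast hm
  set f : ℕ → ℝ := fun i => ((Nat.choose m i : ℝ))⁻¹ with hf
  -- cast facts
  have hc2 : ((m - 1 : ℕ) : ℝ) = x - 1 := by push_cast [Nat.cast_sub (by omega : 1 ≤ m)]; ring
  have hc3 : ((m - 2 : ℕ) : ℝ) = x - 2 := by push_cast [Nat.cast_sub (by omega : 2 ≤ m)]; ring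
  have hc5 : ((m - 5 : ℕ) : ℝ) = x - 5 := by push_cast [Nat.cast_sub (by omega : 5 ≤ m)]; ring
  -- bound for C(m,2)
  have hC2 : (x - 1) ^ 2 / 2 ≤ (Nat.choose m 2 : ℝ) := by
    have := Nat.pow_le_choose (α := ℝ) 2 m
    rw [show m + 1 - 2 = m - 1 by omega, hc2] at this
    simpa [Nat.factorial] using this
  have hC2pos : (0 : ℝ) < (x - 1) ^ 2 / 2 := by nlinarith
  have hf2 : f 2 ≤ 2 / (x - 1) ^ 2 := by
    rw [hf]
    have := inv_anti₀ hC2pos hC2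
    rw [inv_div] at this
    simpa using this
  -- bound for C(m,3)
  have hC3 : (x - 2) ^ 3 / 6 ≤ (Nat.choose m 3 : ℝ) := by
    have := Nat.pow_le_choose (α := ℝ) 3 m
    rw [show m + 1 - 3 = m - 2 by omega, hc3] at this
    have h6 : ((Nat.factorial 3 : ℕ) : ℝ) = 6 := by norm_num [Nat.factorial]
    rw [h6] at this
    exact this
  have hC3pos : (0 : ℝ) < (x - 2) ^ 3 / 6 := div_pos (pow_pos (by linarith) 3) (by norm_num)
  -- middle terms
  have hmid : ∀ i ∈ Finset.Ico 3 (m - 2), f i ≤ 6 / (x - 2) ^ 3 := by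
    intro i hi
    rw [Finset.mem_Ico] at hi
    have hle : (Nat.choose m 3 : ℝ) ≤ (Nat.choose m i : ℝ) := by
      exact_mod_cast choose_three_le (by omega) hi.1 (by omega)
    have := inv_anti₀ hC3pos (le_trans hC3 hle)
    rw [inv_div] at this
    simpa [hf] using this
  have hmidsum : ∑ i ∈ Finset.Ico 3 (m - 2), f i ≤ (x - 5) * (6 / (x - 2) ^ 3) := by
    calc ∑ i ∈ Finset.Ico 3 (m - 2), f i
        ≤ (Finset.Ico 3 (m - 2)).card • (6 / (x - 2) ^ 3) :=
          Finset.sum_le_card_nsmul _ _ _ hmid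
      _ = (x - 5) * (6 / (x - 2) ^ 3) := by
          rw [Nat.card_Ico, nsmul_eq_mul, show m - 2 - 3 = m - 5 by omega, hc5]
  -- top two terms
  have hfm2 : f (m - 2) ≤ 2 / (x - 1) ^ 2 := by
    have hsymm : Nat.choose m (m - 2) = Nat.choose m 2 := by
      rw [← Nat.choose_symm (by omega : 2 ≤ m)]
    rw [hf]
    simp only [hsymm]
    have := inv_anti₀ hC2pos hC2
    rw [inv_div] at this
    simpa using this
  have hfm1 : f (m - 1) = 1 / x := by
    have hsymm : Nat.choose m (m - 1) = Nat.choose m 1 := by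
      rw [← Nat.choose_symm (by omega : 1 ≤ m)]
    rw [hf]
    simp [hsymm, Nat.choose_one_right, one_div, hxdef]
  -- assemble
  have split1 : ∑ i ∈ Finset.range m, f i =
      (∑ i ∈ Finset.Ico 0 3, f i) + (∑ i ∈ Finset.Ico 3 (m - 2), f i)
        + (∑ i ∈ Finset.Ico (m - 2) m, f i) := by
    rw [Finset.range_eq_Ico,
      ← Finset.sum_Ico_consecutive f (by omega : 0 ≤ 3) (by omega : 3 ≤ m),
      ← Finset.sum_Ico_consecutive f (by omega : 3 ≤ m - 2) (by omega : m - 2 ≤ m)]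
    ring
  have hico03 : ∑ i ∈ Finset.Ico 0 3, f i = f 0 + f 1 + f 2 := by
    rw [← Finset.range_eq_Ico]
    simp [Finset.sum_range_succ]
  have htop : ∑ i ∈ Finset.Ico (m - 2) m, f i = f (m - 2) + f (m - 1) := by
    have : Finset.Ico (m - 2) m = {m - 2, m - 1} := by
      ext j; simp [Finset.mem_Ico, Finset.mem_insert]; omega
    rw [this, Finset.sum_insert (by simp; omega), Finset.sum_singleton]
  have hf0 : f 0 = 1 := by simp [hf]
  have hf1 : f 1 = 1 / x := by simp [hf, Nat.choose_one_right, one_div, hxdef]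
  rw [split1, hico03, htop, hf0, hf1, hfm1]
  have key : 1 / x + 2 / (x - 1) ^ 2 + (x - 5) * (6 / (x - 2) ^ 3)
      + (2 / (x - 1) ^ 2 + 1 / x) ≤ 3 / x := by
    have h20 : (0 : ℝ) ≤ x - 20 := by linarith
    have h1 : 2 / (x - 1) ^ 2 ≤ 1 / (4 * x) := by
      rw [div_le_div_iff₀ (pow_pos (by linarith : (0:ℝ) < x - 1) 2)
        (by linarith : (0:ℝ) < 4 * x)]
      nlinarith
    have h2 : (x - 5) * (6 / (x - 2) ^ 3) ≤ 1 / (2 * x) := by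
      rw [mul_div_assoc', div_le_div_iff₀ (pow_pos (by linarith : (0:ℝ) < x - 2) 3)
        (by linarith : (0:ℝ) < 2 * x)]
      nlinarith [mul_nonneg (mul_nonneg h20 h20) h20, sq_nonneg (x - 20)]
    have hx0 : x ≠ 0 := ne_of_gt (by linarith)
    have h3 : 1 / (4 * x) + 1 / (4 * x) + 1 / (2 * x) = 1 / x := by
      field_simp
      ring
    have h4 : 3 / x = 1 / x + 1 / x + 1 / x := by ring
    linarith [h1, h2, h3, h4]
  linarith [hf2, hmidsum, hfm2, key]

theorem sum_inv_binomial_le :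
    ∀ᶠ n : ℕ in atTop,
      ∑ i ∈ Finset.range (n - 1), ((Nat.choose (n - 1) i : ℝ))⁻¹ ≤ 1 + 3 / ((n : ℝ) - 1) := by
  filter_upwards [eventually_ge_atTop 21] with n hn
  have hcast : (n : ℝ) - 1 = ((n - 1 : ℕ) : ℝ) := by
    push_cast [Nat.cast_sub (by omega : 1 ≤ n)]; ring
  rw [hcast]
  exact main_bound (by omega)
end
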